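/- arXiv:2308.14314 — 8 statements merged into one kernel-verified Lean document; each statement's English description precedes it below -/
import Mathlib

section
/- Let (a_n)_{n∈ℕ} be a nonnegative sequence of real numbers such that the series ∑_{n=0}^∞ n·a_n converges. Then liminf_{n→∞} n²·(log n)·(log log n)·a_n = 0. -/
open Real Filter Finset

noncomputable def gg (n : ℕ) : ℝ := 1 / ((n : ℝ) * Real.log n * Real.log (Real.log n))

lemma one_lt_log {x : ℝ} (hx : 3 ≤ x) : 1 < Real.log x := by
  rw [Real.lt_log_iff_exp_lt (by linarith)]
  calc Real.exp 1 < 2.7182818286 := Real.exp_one_lt_d9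
    _ ≤ 3 := by norm_num
    _ ≤ x := hx

lemma loglog_pos {x : ℝ} (hx : 3 ≤ x) : 0 < Real.log (Real.log x) :=
  Real.log_pos (one_lt_log hx)

lemma gg_pos {n : ℕ} (hn : 3 ≤ n) : 0 < gg n := by
  have h3 : (3:ℝ) ≤ (n:ℝ) := by exact_mod_cast hn
  have h1 := one_lt_log h3
  have h2 := loglog_pos h3
  unfold gg
  positivity

-- per-term bound
lemma term_bound {n b : ℕ} (hn : 3 ≤ n) (hb : n < b) :
    (Real.log (n+1) - Real.log n) / (Real.log b * Real.log (Real.log b)) ≤ gg n := by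
  have h3 : (3:ℝ) ≤ (n:ℝ) := by exact_mod_cast hn
  have hb3 : (3:ℝ) ≤ (b:ℝ) := by exact_mod_cast hn.trans hb.le
  have hnb : (n:ℝ) ≤ (b:ℝ) := by exact_mod_cast hb.le
  have hn0 : (0:ℝ) < n := by linarith
  have hlogn := one_lt_log h3
  have hlln := loglog_pos h3
  have hlogb := one_lt_log hb3
  have hllb := loglog_pos hb3
  have hlog_le : Real.log n ≤ Real.log b := Real.log_le_log (by linarith) hnb
  have hll_le : Real.log (Real.log n) ≤ Real.log (Real.log b) :=
    Real.log_le_log (by linarith) hlog_le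
  have hdelta : Real.log (n+1) - Real.log n ≤ 1 / n := by
    have : Real.log ((n+1)/n) ≤ (n+1)/n - 1 := Real.log_le_sub_one_of_pos (by positivity)
    rw [Real.log_div (by positivity) (by positivity)] at this
    have h2 : ((n:ℝ)+1)/n - 1 = 1/n := by field_simp; ring
    linarith [this, h2 ▸ this]
  have hgg : gg n = (1/(n:ℝ)) / (Real.log n * Real.log (Real.log n)) := by
    unfold gg; rw [div_div, mul_assoc]
  rw [hgg]
  gcongr

-- telescoping sum over Ico
lemma telescope (a b : ℕ) (h : a ≤ b) :
    ∑ n ∈ Finset.Ico a b, (Real.log (n+1) - Real.log n) = Real.log b - Real.log a := by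
  rw [Finset.sum_Ico_eq_sub _ h]
  have t : ∀ m : ℕ, ∑ n ∈ Finset.range m, (Real.log (n+1) - Real.log n)
      = Real.log m - Real.log 0 := by
    intro m
    have h := Finset.sum_range_sub (fun n : ℕ => Real.log n) m
    push_cast at h ⊢
    exact h
  rw [t b, t a]; ring

lemma block_bound (k : ℕ) (hk : 1 ≤ k) :
    1 / (2 * Real.log 2 * (k+1)) ≤ ∑ n ∈ Finset.Ico (2^(2^k)) (2^(2^(k+1))), gg n := by
  set a : ℕ := 2^(2^k)
  set b : ℕ := 2^(2^(k+1))
  have hab : a ≤ b := Nat.pow_le_pow_right (by norm_num) (Nat.pow_le_pow_right (by norm_num) (by omega))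
  have ha4 : 4 ≤ a := by
    calc 4 = 2^2^1 := by norm_num
    _ ≤ a := Nat.pow_le_pow_right (by norm_num) (Nat.pow_le_pow_right (by norm_num) hk)
  have hb3 : (3:ℝ) ≤ (b:ℝ) := by
    have : 4 ≤ b := le_trans ha4 hab
    exact_mod_cast by omega
  have hlog2 : (0.6931471803:ℝ) < Real.log 2 := Real.log_two_gt_d9
  -- log b = 2^(k+1) * log 2
  have hlogb : Real.log b = (2:ℝ)^(k+1) * Real.log 2 := by
    have : (b:ℝ) = (2:ℝ)^(2^(k+1)) := by push_cast [b]; norm_num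
    rw [this, Real.log_pow]; push_cast; ring
  have hloga : Real.log a = (2:ℝ)^k * Real.log 2 := by
    have : (a:ℝ) = (2:ℝ)^(2^k) := by push_cast [a]; norm_num
    rw [this, Real.log_pow]; push_cast; ring
  -- loglog b bounds
  have hllb_eq : Real.log (Real.log b) = (k+1) * Real.log 2 + Real.log (Real.log 2) := by
    rw [hlogb, Real.log_mul (by positivity) (by linarith), Real.log_pow]; push_cast; ring
  have hll2 : -1 < Real.log (Real.log 2) := by
    have : Real.log (1/2) < Real.log (Real.log 2) :=
      Real.log_lt_log (by norm_num) (by linarith)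
    rw [Real.log_div one_ne_zero (by norm_num), Real.log_one] at this
    linarith [Real.log_two_lt_d9]
  have hll2' : Real.log (Real.log 2) ≤ 0 :=
    Real.log_nonpos (by linarith) (by linarith [Real.log_two_lt_d9])
  have hllb_pos : 0 < Real.log (Real.log b) := loglog_pos hb3
  have hllb_le : Real.log (Real.log b) ≤ (k+1) * Real.log 2 := by
    rw [hllb_eq]; linarith
  -- sum bound
  have step1 : (Real.log b - Real.log a) / (Real.log b * Real.log (Real.log b))
      ≤ ∑ n ∈ Finset.Ico a b, gg n := by
    rw [← telescope a b hab, Finset.sum_div]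
    apply Finset.sum_le_sum
    intro n hn
    rw [Finset.mem_Ico] at hn
    exact term_bound (by omega) hn.2
  refine le_trans ?_ step1
  have e1 : Real.log b - Real.log a = (2:ℝ)^k * Real.log 2 := by
    rw [hlogb, hloga, pow_succ]; ring
  rw [e1]
  set X := Real.log (Real.log (b:ℝ)) with hXdef
  rw [hlogb, pow_succ]
  have hl2 : (0:ℝ) < Real.log 2 := by linarith
  have e2 : (2:ℝ)^k * Real.log 2 / ((2:ℝ)^k * 2 * Real.log 2 * X)
      = 1 / (2 * X) := by
    field_simp
  rw [e2]
  apply one_div_le_one_div_of_le (by positivity)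
  nlinarith [hllb_le]

lemma not_summable_gg : ¬ Summable gg := by
  intro hs
  have hlog2 : (0.6931471803:ℝ) < Real.log 2 := Real.log_two_gt_d9
  have hl2 : (0:ℝ) < Real.log 2 := by linarith
  have hshift : Summable (fun n => gg (n+4)) := (summable_nat_add_iff 4).2 hs
  set C := ∑' n, gg (n+4) with hC
  have hbound : ∀ N : ℕ, ∑ n ∈ Finset.Ico 4 N, gg n ≤ C := by
    intro N
    rw [Finset.sum_Ico_eq_sum_range]
    have : ∀ i ∈ Finset.range (N-4), gg (4+i) = gg (i+4) := by
      intro i _; rw [Nat.add_comm]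
    rw [Finset.sum_congr rfl this]
    exact Summable.sum_le_tsum (Finset.range (N-4)) (fun i _ => (gg_pos (by omega)).le) hshift
  have hlow : ∀ K : ℕ,
      (1/(2*Real.log 2)) * ∑ k ∈ Finset.Ico 1 (K+1), (1/((k:ℝ)+1))
        ≤ ∑ n ∈ Finset.Ico 4 (2^(2^(K+1))), gg n := by
    intro K
    induction K with
    | zero => norm_num
    | succ K ih =>
      have h4 : (4:ℕ) ≤ 2^(2^(K+1)) := by
        calc (4:ℕ) = 2^2^1 := by norm_num
        _ ≤ 2^(2^(K+1)) := Nat.pow_le_pow_right (by norm_num)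
            (Nat.pow_le_pow_right (by norm_num) (by omega))
      have hmono : (2:ℕ)^(2^(K+1)) ≤ 2^(2^(K+2)) :=
        Nat.pow_le_pow_right (by norm_num) (Nat.pow_le_pow_right (by norm_num) (by omega))
      rw [← Finset.sum_Ico_consecutive _ h4 hmono]
      rw [Finset.sum_Ico_succ_top (by omega : 1 ≤ K+1), mul_add]
      have hblock := block_bound (K+1) (by omega)
      have heq : (1/(2*Real.log 2)) * (1/(((K+1:ℕ):ℝ)+1))
          = 1 / (2 * Real.log 2 * (((K+1:ℕ):ℝ)+1)) := by
        rw [one_div_mul_one_div]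
      refine add_le_add ih ?_
      rw [heq]
      exact_mod_cast hblock
  -- harmonic divergence
  have htend := Real.tendsto_sum_range_one_div_nat_succ_atTop
  obtain ⟨N, hN⟩ := eventually_atTop.mp
    (htend.eventually_ge_atTop (2*Real.log 2 * C + 2))
  have hK : 2*Real.log 2*C + 2 ≤ ∑ i ∈ Finset.range (N+1), (1/((i:ℝ)+1)) :=
    hN (N+1) (by omega)
  have hIco : ∑ k ∈ Finset.Ico 1 (N+1), (1/((k:ℝ)+1))
      = (∑ i ∈ Finset.range (N+1), (1/((i:ℝ)+1))) - 1 := by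
    rw [Finset.range_eq_Ico,
      ← Finset.sum_Ico_consecutive _ (Nat.zero_le 1) (by omega : 1 ≤ N+1)]
    norm_num
  have h1 := hlow N
  have h2 := hbound (2^(2^(N+1)))
  rw [hIco] at h1
  have ht : (1/(2*Real.log 2)) * (2*Real.log 2) = 1 := by
    field_simp
  set t := 1/(2*Real.log 2) with htdef
  set H := ∑ i ∈ Finset.range (N+1), (1/((i:ℝ)+1)) with hHdef
  have h3 : t * (2*Real.log 2*C + 2) ≤ t * H := mul_le_mul_of_nonneg_left hK (by positivity)
  have h4 : t * (2*Real.log 2*C + 2) = C + 1/Real.log 2 := by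
    rw [htdef]; field_simp
  have h6 : t * (H - 1) = t*H - t := by ring
  have h7 : 1/Real.log 2 = 2*t := by rw [htdef]; field_simp
  have h8 : 0 < t := by rw [htdef]; positivity
  linarith

/-- If `(a n)` is a nonnegative real sequence with `∑ n * a n < ∞`, then
`liminf n ^ 2 * log n * log (log n) * a n = 0`. -/
theorem nsa_stmt_1 (a : ℕ → ℝ)
    (hnonneg : ∀ n, 0 ≤ a n)
    (hsum : Summable fun n : ℕ => (n : ℝ) * a n) :
    Filter.liminf
      (fun n : ℕ => (n : ℝ) ^ 2 * Real.log n * Real.log (Real.log n) * a n)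
      Filter.atTop = 0 := by
  set f := fun n : ℕ => (n : ℝ) ^ 2 * Real.log n * Real.log (Real.log n) * a n with hf
  rw [Filter.liminf_eq]
  have hset : {c : ℝ | ∀ᶠ n in atTop, c ≤ f n} = Set.Iic 0 := by
    apply Set.eq_of_subset_of_subset
    · intro c hc
      simp only [Set.mem_setOf_eq] at hc
      by_contra hpos
      simp only [Set.mem_Iic, not_le] at hpos
      -- derive Summable gg, contradiction
      obtain ⟨N, hN⟩ := eventually_atTop.mp hc
      set M := max N 3 with hM
      apply not_summable_gg
      rw [← summable_nat_add_iff M]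
      have hsum' : Summable (fun n => (((n+M : ℕ)):ℝ) * a (n+M)) :=
        (summable_nat_add_iff M).2 hsum
      refine Summable.of_nonneg_of_le
        (f := fun n => c⁻¹ * ((((n+M : ℕ)):ℝ) * a (n+M))) ?_ ?_ (hsum'.mul_left c⁻¹)
      · intro n
        exact (gg_pos (by omega)).le
      · intro n
        set m := n + M with hm
        have hm3 : 3 ≤ m := by omega
        have hm3' : (3:ℝ) ≤ (m:ℝ) := by exact_mod_cast hm3
        have hlm := one_lt_log hm3'
        have hllm := loglog_pos hm3'
        have hD : 0 < (m:ℝ) * Real.log m * Real.log (Real.log m) := by positivity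
        have h1 : c ≤ ((m:ℝ) * Real.log m * Real.log (Real.log m)) * ((m:ℝ) * a m) := by
          have := hN m (by omega)
          calc c ≤ f m := this
          _ = ((m:ℝ) * Real.log m * Real.log (Real.log m)) * ((m:ℝ) * a m) := by
            rw [hf]; ring
        have h2 : c⁻¹ * c ≤ c⁻¹ * (((m:ℝ) * Real.log m * Real.log (Real.log m)) * ((m:ℝ) * a m)) :=
          mul_le_mul_of_nonneg_left h1 (by positivity)
        rw [inv_mul_cancel₀ (ne_of_gt hpos)] at h2
        show gg m ≤ c⁻¹ * ((m:ℝ) * a m)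
        unfold gg
        rw [div_le_iff₀ hD]
        calc (1:ℝ) ≤ c⁻¹ * (((m:ℝ) * Real.log m * Real.log (Real.log m)) * ((m:ℝ) * a m)) := h2
        _ = c⁻¹ * ((m:ℝ) * a m) * ((m:ℝ) * Real.log m * Real.log (Real.log m)) := by ring
    · intro c hc
      simp only [Set.mem_Iic] at hc
      simp only [Set.mem_setOf_eq]
      filter_upwards [eventually_ge_atTop 3] with n hn
      have hn3 : (3:ℝ) ≤ (n:ℝ) := by exact_mod_cast hn
      have h0 : 0 ≤ f n := by
        have h1 := (one_lt_log hn3).le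
        have h2 := (loglog_pos hn3).le
        have h3 := hnonneg n
        rw [hf]
        positivity
      linarith
  rw [hset, csSup_Iic]
end

section
/- For every k ∈ ℕ, the NSA iterates satisfy δ_{k+1} ≤ δ_k and f(x_{k+1}) ≤ f(y_k) − (2η/3)·‖∇f(y_k)‖². -/
open RealInnerProductSpace

lemma smooth_ub {E : Type*} [NormedAddCommGroup E] [InnerProductSpace ℝ E] [CompleteSpace E]
    (f : E → ℝ) (hdiff : Differentiable ℝ f) (L : ℝ)
    (hlip : ∀ x x' : E, ‖gradient f x - gradient f x'‖ ≤ L * ‖x - x'‖)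
    (u v : E) : f v ≤ f u + ⟪gradient f u, v - u⟫ + L / 2 * ‖v - u‖ ^ 2 := by
  set c1 : ℝ := ⟪gradient f u, v - u⟫ with hc1
  set c2 : ℝ := L / 2 * ‖v - u‖ ^ 2 with hc2
  set path : ℝ → E := fun t => u + t • (v - u) with hpathdef
  set g : ℝ → ℝ := fun t => f (path t) - t * c1 - t ^ 2 * c2 with hg
  have hfderiv : ∀ w : E, ∀ d : E, fderiv ℝ f w d = ⟪gradient f w, d⟫ := by
    intro w d
    have := (hdiff w).hasGradientAt.hasFDerivAt
    rw [this.fderiv]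
    simp [InnerProductSpace.toDualMap_apply_apply]
  have hgderiv : ∀ t : ℝ, HasDerivAt g
      (⟪gradient f (path t), v - u⟫ - c1 - (2 * t) * c2) t := by
    intro t
    have hpath : HasDerivAt path (v - u) t := by
      simpa [hpathdef] using ((hasDerivAt_id t).smul_const (v - u)).const_add u
    have hA : HasDerivAt (fun t => f (path t)) (fderiv ℝ f (path t) (v - u)) t :=
      (hdiff (path t)).hasFDerivAt.comp_hasDerivAt t hpath
    rw [hfderiv] at hA
    have hB : HasDerivAt (fun t : ℝ => t * c1) c1 t := by
      simpa using (hasDerivAt_id t).mul_const c1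
    have hC : HasDerivAt (fun t : ℝ => t ^ 2 * c2) ((2 * t) * c2) t := by
      simpa using (hasDerivAt_pow 2 t).mul_const c2
    exact (hA.sub hB).sub hC
  have hanti : AntitoneOn g (Set.Icc 0 1) := by
    apply antitoneOn_of_deriv_nonpos (convex_Icc 0 1)
    · exact Continuous.continuousOn (by
        have : Differentiable ℝ g := fun t => (hgderiv t).differentiableAt
        exact this.continuous)
    · intro t ht
      rw [interior_Icc] at ht
      exact ((hgderiv t).differentiableAt).differentiableWithinAt
    · intro t ht
      rw [interior_Icc] at ht
      rw [(hgderiv t).deriv]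
      have key : ⟪gradient f (path t), v - u⟫ - c1 ≤ (2 * t) * c2 := by
        have h1 : ⟪gradient f (path t), v - u⟫ - c1
            = ⟪gradient f (path t) - gradient f u, v - u⟫ := by
          rw [hc1, inner_sub_left]
        rw [h1]
        calc ⟪gradient f (path t) - gradient f u, v - u⟫
            ≤ ‖gradient f (path t) - gradient f u‖ * ‖v - u‖ :=
              real_inner_le_norm _ _
          _ ≤ (L * ‖path t - u‖) * ‖v - u‖ := by
              apply mul_le_mul_of_nonneg_right (hlip _ _) (norm_nonneg _)
          _ = (2 * t) * c2 := by
              have : ‖path t - u‖ = t * ‖v - u‖ := by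
                simp [hpathdef, norm_smul, abs_of_pos ht.1]
              rw [this, hc2]; ring
      linarith
  have h01 : g 1 ≤ g 0 := hanti (Set.left_mem_Icc.2 zero_le_one)
    (Set.right_mem_Icc.2 zero_le_one) zero_le_one
  have hg0 : g 0 = f u := by simp [hg, hpathdef]
  have hg1 : g 1 = f v - c1 - c2 := by simp [hg, hpathdef]
  rw [hg0, hg1] at h01
  linarith

lemma descent_step {E : Type*} [NormedAddCommGroup E] [InnerProductSpace ℝ E] [CompleteSpace E]
    (f : E → ℝ) (hdiff : Differentiable ℝ f) (L : ℝ) (hL : 0 < L)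
    (hlip : ∀ x x' : E, ‖gradient f x - gradient f x'‖ ≤ L * ‖x - x'‖)
    (η : ℝ) (hη0 : 0 < η) (hη : η ≤ 2 / (3 * L)) (u : E) :
    f (u - η • gradient f u) ≤ f u - 2 * η / 3 * ‖gradient f u‖ ^ 2 := by
  have h := smooth_ub f hdiff L hlip u (u - η • gradient f u)
  have hsub : u - η • gradient f u - u = -(η • gradient f u) := by abel
  rw [hsub] at h
  have hinner : ⟪gradient f u, -(η • gradient f u)⟫ = -(η * ‖gradient f u‖ ^ 2) := by
    rw [inner_neg_right, real_inner_smul_right, real_inner_self_eq_norm_sq]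
    try ring
  have hnorm : ‖-(η • gradient f u)‖ ^ 2 = η ^ 2 * ‖gradient f u‖ ^ 2 := by
    rw [norm_neg, norm_smul, mul_pow, Real.norm_eq_abs, sq_abs]
  rw [hinner, hnorm] at h
  have hLη : L * η ≤ 2 / 3 := by
    rw [le_div_iff₀ (by positivity)] at hη
    nlinarith
  nlinarith [sq_nonneg ‖gradient f u‖, sq_nonneg η]

theorem nsa_stmt_3 (n : ℕ) (hn : 1 ≤ n)
    (f : EuclideanSpace ℝ (Fin n) → ℝ)
    (hconv : ConvexOn ℝ Set.univ f)
    (hdiff : Differentiable ℝ f)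
    (L : ℝ) (hL : 0 < L)
    (hlip : ∀ x x' : EuclideanSpace ℝ (Fin n),
      ‖gradient f x - gradient f x'‖ ≤ L * ‖x - x'‖)
    (xstar : EuclideanSpace ℝ (Fin n)) (hmin : ∀ u, f xstar ≤ f u)
    (p : ℝ) (hp : 3 ≤ p)
    (η : ℝ) (hη0 : 0 < η) (hη : η ≤ 2 / (3 * L))
    (α : ℕ → ℝ) (hα : ∀ k : ℕ, α k = p / (k + p))
    (x y z : ℕ → EuclideanSpace ℝ (Fin n))
    (hx0 : x 0 = z 0)
    (hy : ∀ k, y k = (1 - α k) • x k + α k • z k)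
    (hx : ∀ k, x (k + 1) =
      if f (y k - η • gradient f (y k)) ≤ f (x k - η • gradient f (x k))
      then y k - η • gradient f (y k)
      else x k - η • gradient f (x k))
    (hz : ∀ k, z (k + 1) = z k - (η / α k) • gradient f (y k))
    :
    ∀ k : ℕ,
      f (x (k + 1)) - f xstar ≤ f (x k) - f xstar ∧
      f (x (k + 1)) ≤ f (y k) - (2 * η / 3) * ‖gradient f (y k)‖ ^ 2 := by
  intro k
  have hdy := descent_step f hdiff L hL hlip η hη0 hη (y k)
  have hdx := descent_step f hdiff L hL hlip η hη0 hη (x k)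
  have hmain : f (x (k + 1)) ≤ f (y k - η • gradient f (y k)) ∧
      f (x (k + 1)) ≤ f (x k - η • gradient f (x k)) := by
    rw [hx k]
    split_ifs with h
    · exact ⟨le_refl _, h⟩
    · exact ⟨le_of_lt (lt_of_not_ge h), le_refl _⟩
  constructor
  · have := hmain.2
    have hgx : 0 ≤ 2 * η / 3 * ‖gradient f (x k)‖ ^ 2 := by positivity
    linarith
  · linarith [hmain.1]
end

section
/- For every k ≥ 1, the NSA iterates satisfy the Lyapunov inequality Δ_{k+1}/γ_{k+1} ≤ Δ_k/γ_k + (1/γ_{k+1} − α_k/γ_{k+1} − 1/γ_k)·δ_k − (η/(6γ_{k+1}))·‖∇f(y_k)‖². -/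
open RealInnerProductSpace

section aux
variable {n : ℕ} {f : EuclideanSpace ℝ (Fin n) → ℝ}

lemma line_hasDerivAt (hdiff : Differentiable ℝ f)
    (u d : EuclideanSpace ℝ (Fin n)) (t : ℝ) :
    HasDerivAt (fun s : ℝ => f (u + s • d)) ⟪gradient f (u + t • d), d⟫ t := by
  have hc : HasDerivAt (fun s : ℝ => u + s • d) d t := by
    simpa using ((hasDerivAt_id t).smul_const d).const_add u
  have hf : HasFDerivAt f
      (InnerProductSpace.toDual ℝ _ (gradient f (u + t • d)) : _ →L[ℝ] ℝ) (u + t • d) :=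
    (hdiff _).hasGradientAt.hasFDerivAt
  exact hf.comp_hasDerivAt t hc

lemma convex_lower (hconv : ConvexOn ℝ Set.univ f) (hdiff : Differentiable ℝ f)
    (u v : EuclideanSpace ℝ (Fin n)) :
    f u + ⟪gradient f u, v - u⟫ ≤ f v := by
  set d := v - u with hd
  have hφconv : ConvexOn ℝ Set.univ (fun s : ℝ => f (u + s • d)) := by
    have := hconv.comp_affineMap (AffineMap.lineMap u v)
    simp only [Set.preimage_univ] at this
    refine this.congr (fun s _ => ?_)
    simp [AffineMap.lineMap_apply, hd, add_comm]
  have hder : HasDerivAt (fun s : ℝ => f (u + s • d)) ⟪gradient f u, d⟫ 0 := by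
    simpa using line_hasDerivAt hdiff u d 0
  have h := hφconv.le_slope_of_hasDerivAt (Set.mem_univ 0) (Set.mem_univ 1) one_pos hder
  rw [slope_def_field] at h
  simp only [hd] at h ⊢
  have h1 : u + (1:ℝ) • (v - u) = v := by module
  have h0 : u + (0:ℝ) • (v - u) = u := by module
  rw [h1, h0] at h
  linarith
end aux

section aux2
variable {n : ℕ} {f : EuclideanSpace ℝ (Fin n) → ℝ}

lemma descent_lemma (hdiff : Differentiable ℝ f) {L : ℝ} (hL : 0 ≤ L)
    (hlip : ∀ a b : EuclideanSpace ℝ (Fin n), ‖gradient f a - gradient f b‖ ≤ L * ‖a - b‖)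
    (u v : EuclideanSpace ℝ (Fin n)) :
    f v ≤ f u + ⟪gradient f u, v - u⟫ + L / 2 * ‖v - u‖ ^ 2 := by
  set d := v - u with hd
  set φ' : ℝ → ℝ := fun t => ⟪gradient f (u + t • d), d⟫ with hφ'
  have hderiv : ∀ t : ℝ, HasDerivAt (fun s : ℝ => f (u + s • d)) (φ' t) t :=
    fun t => line_hasDerivAt hdiff u d t
  have hgcont : Continuous (gradient f) := by
    refine (LipschitzWith.of_dist_le_mul (K := L.toNNReal) ?_).continuous
    intro a b
    rw [dist_eq_norm, dist_eq_norm, Real.coe_toNNReal L hL]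
    exact hlip a b
  have hcont : Continuous φ' := by
    apply Continuous.inner
    · exact hgcont.comp (by continuity)
    · exact continuous_const
  have hFTC : f (u + (1:ℝ) • d) - f (u + (0:ℝ) • d) = ∫ t in (0:ℝ)..1, φ' t := by
    rw [intervalIntegral.integral_eq_sub_of_hasDerivAt (fun t _ => hderiv t)
      (hcont.intervalIntegrable 0 1)]
  have hmono : (∫ t in (0:ℝ)..1, φ' t) ≤ ∫ t in (0:ℝ)..1, (φ' 0 + L * ‖d‖ ^ 2 * t) := by
    apply intervalIntegral.integral_mono_on (by norm_num) (hcont.intervalIntegrable 0 1)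
      ((by continuity : Continuous fun t : ℝ => φ' 0 + L * ‖d‖ ^ 2 * t).intervalIntegrable 0 1)
    intro t ht
    have key : φ' t - φ' 0 ≤ L * ‖d‖ ^ 2 * t := by
      have h1 : φ' t - φ' 0 = ⟪gradient f (u + t • d) - gradient f (u + (0:ℝ) • d), d⟫ := by
        simp [hφ', inner_sub_left]
      rw [h1]
      calc ⟪gradient f (u + t • d) - gradient f (u + (0:ℝ) • d), d⟫
          ≤ ‖gradient f (u + t • d) - gradient f (u + (0:ℝ) • d)‖ * ‖d‖ :=
            real_inner_le_norm _ _
        _ ≤ (L * ‖(u + t • d) - (u + (0:ℝ) • d)‖) * ‖d‖ :=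
            mul_le_mul_of_nonneg_right (hlip _ _) (norm_nonneg d)
        _ = L * ‖d‖ ^ 2 * t := by
            have : (u + t • d) - (u + (0:ℝ) • d) = t • d := by module
            rw [this, norm_smul, Real.norm_eq_abs, abs_of_nonneg ht.1]
            ring
    linarith
  have hint2 : (∫ t in (0:ℝ)..1, (φ' 0 + L * ‖d‖ ^ 2 * t)) = φ' 0 + L / 2 * ‖d‖ ^ 2 := by
    rw [intervalIntegral.integral_add intervalIntegrable_const
      ((intervalIntegral.intervalIntegrable_id).const_mul _)]
    rw [intervalIntegral.integral_const, intervalIntegral.integral_const_mul,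
      integral_id]
    norm_num
    ring
  have h1 : u + (1:ℝ) • d = v := by rw [hd]; module
  have h0 : u + (0:ℝ) • d = u := by module
  have hφ'0 : φ' 0 = ⟪gradient f u, d⟫ := by simp only [hφ', h0]
  rw [h1, h0] at hFTC
  rw [hint2, hφ'0] at hmono
  linarith
end aux2
theorem nsa_stmt_4 (n : ℕ) (hn : 1 ≤ n)
    (f : EuclideanSpace ℝ (Fin n) → ℝ)
    (hconv : ConvexOn ℝ Set.univ f)
    (hdiff : Differentiable ℝ f)
    (L : ℝ) (hL : 0 < L)
    (hlip : ∀ x x' : EuclideanSpace ℝ (Fin n),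
      ‖gradient f x - gradient f x'‖ ≤ L * ‖x - x'‖)
    (xstar : EuclideanSpace ℝ (Fin n)) (hmin : ∀ u, f xstar ≤ f u)
    (p : ℝ) (hp : 3 ≤ p)
    (η : ℝ) (hη0 : 0 < η) (hη : η ≤ 2 / (3 * L))
    (α : ℕ → ℝ) (hα : ∀ k : ℕ, α k = p / (k + p))
    (x y z : ℕ → EuclideanSpace ℝ (Fin n))
    (hx0 : x 0 = z 0)
    (hy : ∀ k, y k = (1 - α k) • x k + α k • z k)
    (hx : ∀ k, x (k + 1) =
      if f (y k - η • gradient f (y k)) ≤ f (x k - η • gradient f (x k))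
      then y k - η • gradient f (y k)
      else x k - η • gradient f (x k))
    (hz : ∀ k, z (k + 1) = z k - (η / α k) • gradient f (y k))
    (γ : ℕ → ℝ) (hγ : ∀ k : ℕ, γ (k + 1) = (α k) ^ 2 / η)
    (Δ : ℕ → ℝ)
    (hΔ : ∀ k : ℕ, 1 ≤ k →
      Δ k = γ k / 2 * ‖z k - xstar‖ ^ 2 + (f (x k) - f xstar)) :
    ∀ k : ℕ, 1 ≤ k →
      Δ (k + 1) / γ (k + 1) ≤
        Δ k / γ k
          + (1 / γ (k + 1) - α k / γ (k + 1) - 1 / γ k) * (f (x k) - f xstar)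
          - η / (6 * γ (k + 1)) * ‖gradient f (y k)‖ ^ 2 := by
  intro k hk
  obtain ⟨m, rfl⟩ : ∃ m, k = m + 1 := ⟨k - 1, by omega⟩
  have hp0 : (0 : ℝ) < p := by linarith
  set a := α (m + 1) with ha
  set g := gradient f (y (m + 1)) with hg
  have ha_pos : 0 < a := by rw [ha, hα]; positivity
  have ha_le : a ≤ 1 := by
    rw [ha, hα]
    rw [div_le_one (by positivity)]
    have : (0 : ℝ) ≤ ((m + 1 : ℕ) : ℝ) := Nat.cast_nonneg _
    linarith
  have hc_eq : γ (m + 1 + 1) = a ^ 2 / η := hγ (m + 1)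
  have hαm : 0 < α m := by rw [hα]; positivity
  have hgk_eq : γ (m + 1) = (α m) ^ 2 / η := hγ m
  have hc_pos : 0 < γ (m + 1 + 1) := by rw [hc_eq]; positivity
  have hgk_pos : 0 < γ (m + 1) := by rw [hgk_eq]; positivity
  have hG : (0 : ℝ) ≤ ‖g‖ ^ 2 := sq_nonneg _
  have hδ : 0 ≤ f (x (m + 1)) - f xstar := sub_nonneg.mpr (hmin _)
  -- (A) expansion of the new distance
  have hzz : z (m + 1 + 1) - xstar = (z (m + 1) - xstar) - (η / a) • g := by
    rw [hz (m + 1)]; module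
  have hA : ‖z (m + 1 + 1) - xstar‖ ^ 2
      = ‖z (m + 1) - xstar‖ ^ 2 - 2 * (η / a) * ⟪g, z (m + 1) - xstar⟫
        + (η / a) ^ 2 * ‖g‖ ^ 2 := by
    rw [hzz, norm_sub_sq_real, real_inner_smul_right, real_inner_comm, norm_smul,
      mul_pow, Real.norm_eq_abs, sq_abs]
    ring
  -- (B) splitting the inner product
  have hvec : a • (z (m + 1) - xstar)
      = (1 - a) • (y (m + 1) - x (m + 1)) + a • (y (m + 1) - xstar) := by
    rw [hy (m + 1)]; module
  have hB : a * ⟪g, z (m + 1) - xstar⟫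
      = (1 - a) * ⟪g, y (m + 1) - x (m + 1)⟫ + a * ⟪g, y (m + 1) - xstar⟫ := by
    have h : (⟪g, a • (z (m + 1) - xstar)⟫ : ℝ)
        = ⟪g, (1 - a) • (y (m + 1) - x (m + 1)) + a • (y (m + 1) - xstar)⟫ := by rw [hvec]
    rw [inner_add_right, real_inner_smul_right, real_inner_smul_right,
      real_inner_smul_right] at h
    exact h
  -- (C), (D) convexity lower bounds
  have hC : f (y (m + 1)) + ⟪g, x (m + 1) - y (m + 1)⟫ ≤ f (x (m + 1)) :=
    convex_lower hconv hdiff _ _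
  have hD : f (y (m + 1)) + ⟪g, xstar - y (m + 1)⟫ ≤ f xstar :=
    convex_lower hconv hdiff _ _
  have i1 : ⟪g, x (m + 1) - y (m + 1)⟫ = -⟪g, y (m + 1) - x (m + 1)⟫ := by
    rw [← neg_sub, inner_neg_right]
  have i2 : ⟪g, xstar - y (m + 1)⟫ = -⟪g, y (m + 1) - xstar⟫ := by
    rw [← neg_sub, inner_neg_right]
  have hC' : (1 - a) * (f (y (m + 1)) - ⟪g, y (m + 1) - x (m + 1)⟫)
      ≤ (1 - a) * f (x (m + 1)) := by
    apply mul_le_mul_of_nonneg_left _ (by linarith)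
    rw [i1] at hC; linarith
  have hD' : a * (f (y (m + 1)) - ⟪g, y (m + 1) - xstar⟫) ≤ a * f xstar := by
    apply mul_le_mul_of_nonneg_left _ ha_pos.le
    rw [i2] at hD; linarith
  -- (E) descent lemma
  have hE : f (y (m + 1) - η • g) ≤ f (y (m + 1)) - η * ‖g‖ ^ 2 + L / 2 * (η ^ 2 * ‖g‖ ^ 2) := by
    have h := descent_lemma hdiff hL.le hlip (y (m + 1)) (y (m + 1) - η • g)
    have hsub : (y (m + 1) - η • g) - y (m + 1) = -(η • g) := by module
    rw [hsub] at h
    have e1 : (⟪g, -(η • g)⟫ : ℝ) = -(η * ‖g‖ ^ 2) := by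
      rw [inner_neg_right, real_inner_smul_right, real_inner_self_eq_norm_sq]
    have e2 : ‖-(η • g)‖ ^ 2 = η ^ 2 * ‖g‖ ^ 2 := by
      rw [norm_neg, norm_smul, mul_pow, Real.norm_eq_abs, sq_abs]
    rw [e1, e2] at h
    linarith
  have hLη : L * η ≤ 2 / 3 := by
    rw [le_div_iff₀ (by positivity)] at hη
    linarith
  have hE' : L / 2 * (η ^ 2 * ‖g‖ ^ 2) ≤ η / 3 * ‖g‖ ^ 2 := by
    have hprod : 0 ≤ η * ‖g‖ ^ 2 * (2 / 3 - L * η) :=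
      mul_nonneg (mul_nonneg hη0.le hG) (by linarith)
    linarith [hprod]
  -- (F)
  have hF : f (x (m + 1 + 1)) ≤ f (y (m + 1) - η • g) := by
    rw [hx (m + 1)]
    split_ifs with h
    · exact le_rfl
    · exact le_of_not_ge h
  -- key inequality
  have h1 : γ (m + 1 + 1) / 2 * ‖z (m + 1 + 1) - xstar‖ ^ 2
      = γ (m + 1 + 1) / 2 * ‖z (m + 1) - xstar‖ ^ 2 - a * ⟪g, z (m + 1) - xstar⟫
        + η / 2 * ‖g‖ ^ 2 := by
    rw [hA, hc_eq]
    field_simp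
  have hK : γ (m + 1 + 1) / 2 * ‖z (m + 1 + 1) - xstar‖ ^ 2 + (f (x (m + 1 + 1)) - f xstar)
      ≤ γ (m + 1 + 1) / 2 * ‖z (m + 1) - xstar‖ ^ 2
        + (1 - a) * (f (x (m + 1)) - f xstar) - η / 6 * ‖g‖ ^ 2 := by
    linarith [h1, hB, hC', hD', hE, hE', hF]
  calc Δ (m + 1 + 1) / γ (m + 1 + 1)
      = (γ (m + 1 + 1) / 2 * ‖z (m + 1 + 1) - xstar‖ ^ 2 + (f (x (m + 1 + 1)) - f xstar))
          / γ (m + 1 + 1) := by rw [hΔ (m + 1 + 1) (by omega)]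
    _ ≤ (γ (m + 1 + 1) / 2 * ‖z (m + 1) - xstar‖ ^ 2
          + (1 - a) * (f (x (m + 1)) - f xstar) - η / 6 * ‖g‖ ^ 2) / γ (m + 1 + 1) := by
        gcongr
    _ = Δ (m + 1) / γ (m + 1)
          + (1 / γ (m + 1 + 1) - a / γ (m + 1 + 1) - 1 / γ (m + 1))
            * (f (x (m + 1)) - f xstar)
          - η / (6 * γ (m + 1 + 1)) * ‖g‖ ^ 2 := by
        rw [hΔ (m + 1) (by omega)]
        field_simp
        ring
end

section
/- The NSA iterates satisfy lim_{k→∞} k²·(f(x_k) − f*) = 0 (equivalently, limsup_{k→∞} k²·(f(x_k) − f*) = 0). -/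
open Set Filter

variable {E : Type*} [NormedAddCommGroup E] [InnerProductSpace ℝ E] [CompleteSpace E]

lemma curve_hasDerivAt {f : E → ℝ} (hdiff : Differentiable ℝ f) (a v : E) (t : ℝ) :
    HasDerivAt (fun s : ℝ => f (a + s • v)) (inner ℝ (gradient f (a + t • v)) v : ℝ) t := by
  have h1 : HasFDerivAt f (InnerProductSpace.toDual ℝ E (gradient f (a + t • v))) (a + t • v) :=
    (hdiff (a + t • v)).hasGradientAt
  have hc : HasDerivAt (fun s : ℝ => a + s • v) v t := by
    simpa using ((hasDerivAt_id t).smul_const v).const_add a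
  have := h1.comp_hasDerivAt t hc
  simp only [InnerProductSpace.toDual_apply_apply] at this
  exact this

/-- Convexity gradient inequality. -/
lemma grad_convex_ineq {f : E → ℝ} (hconv : ConvexOn ℝ Set.univ f)
    (hdiff : Differentiable ℝ f) (a b : E) :
    f a + (inner ℝ (gradient f a) (b - a) : ℝ) ≤ f b := by
  set v := b - a
  set g : ℝ → ℝ := fun s => f (a + s • v) with hg
  have hgconv : ConvexOn ℝ Set.univ g := by
    have := hconv.comp_affineMap (AffineMap.lineMap a (a + v) : ℝ →ᵃ[ℝ] E)
    simp only [preimage_univ] at this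
    have e : g = f ∘ (AffineMap.lineMap a (a + v) : ℝ →ᵃ[ℝ] E) := by
      ext s
      simp [hg, Function.comp, AffineMap.lineMap_apply, add_sub_cancel_left, add_comm]
    rw [e]
    exact this
  have hd : HasDerivAt g (inner ℝ (gradient f a) v : ℝ) 0 := by
    simpa using curve_hasDerivAt hdiff a v 0
  have := hgconv.le_slope_of_hasDerivAt (mem_univ (0:ℝ)) (mem_univ (1:ℝ)) one_pos hd
  rw [show slope g 0 1 = g 1 - g 0 by simp [slope_def_field]] at this
  have hg0 : g 0 = f a := by simp [hg]
  have hg1 : g 1 = f b := by simp [hg, v]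
  rw [hg0, hg1] at this
  linarith [this]

/-- Descent lemma: smoothness upper bound. -/
lemma grad_descent {f : E → ℝ} (hdiff : Differentiable ℝ f) {L : ℝ} (hL : 0 ≤ L)
    (hlip : ∀ u w : E, ‖gradient f u - gradient f w‖ ≤ L * ‖u - w‖) (a b : E) :
    f b ≤ f a + (inner ℝ (gradient f a) (b - a) : ℝ) + L / 2 * ‖b - a‖ ^ 2 := by
  set v := b - a with hv
  set c : ℝ := (inner ℝ (gradient f a) v : ℝ) with hc
  set φ : ℝ → ℝ := fun t => f (a + t • v) - t * c - L / 2 * t ^ 2 * ‖v‖ ^ 2 with hφ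
  have hder : ∀ t : ℝ, HasDerivAt φ
      ((inner ℝ (gradient f (a + t • v)) v : ℝ) - c - L * t * ‖v‖ ^ 2) t := by
    intro t
    have h1 := curve_hasDerivAt hdiff a v t
    have h2 : HasDerivAt (fun t : ℝ => t * c) c t := by
      simpa using (hasDerivAt_id t).mul_const c
    have h3 : HasDerivAt (fun t : ℝ => L / 2 * t ^ 2 * ‖v‖ ^ 2) (L * t * ‖v‖ ^ 2) t := by
      have : HasDerivAt (fun t : ℝ => t ^ 2) (2 * t) t := by
        simpa using hasDerivAt_pow 2 t
      have := (this.const_mul (L / 2)).mul_const (‖v‖ ^ 2)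
      rw [show L * t * ‖v‖ ^ 2 = L / 2 * (2 * t) * ‖v‖ ^ 2 by ring]
      exact this
    exact (h1.sub h2).sub h3
  have hmono : AntitoneOn φ (Icc (0:ℝ) 1) := by
    apply antitoneOn_of_deriv_nonpos (convex_Icc 0 1)
    · exact fun t _ => ((hder t).differentiableAt.continuousAt).continuousWithinAt
    · exact fun t _ => ((hder t).differentiableAt).differentiableWithinAt
    · intro t ht
      rw [interior_Icc] at ht
      rw [(hder t).deriv]
      have hb : (inner ℝ (gradient f (a + t • v)) v : ℝ) - c ≤ L * t * ‖v‖ ^ 2 := by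
        have h4 : (inner ℝ (gradient f (a + t • v)) v : ℝ) - c
            = (inner ℝ (gradient f (a + t • v) - gradient f a) v : ℝ) := by
          rw [inner_sub_left]
        rw [h4]
        calc (inner ℝ (gradient f (a + t • v) - gradient f a) v : ℝ)
            ≤ ‖gradient f (a + t • v) - gradient f a‖ * ‖v‖ := real_inner_le_norm _ _
          _ ≤ (L * ‖(a + t • v) - a‖) * ‖v‖ := by
              apply mul_le_mul_of_nonneg_right (hlip _ _) (norm_nonneg _)
          _ = L * t * ‖v‖ ^ 2 := by
              rw [show (a + t • v) - a = t • v by abel, norm_smul]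
              simp [abs_of_pos ht.1]
              ring
        done
      linarith
  have h01 := hmono (by norm_num : (0:ℝ) ∈ Icc (0:ℝ) 1) (by norm_num : (1:ℝ) ∈ Icc (0:ℝ) 1)
    zero_le_one
  have hφ0 : φ 0 = f a := by simp [hφ]
  have hφ1 : φ 1 = f b - c - L / 2 * ‖v‖ ^ 2 := by simp [hφ, hv]
  rw [hφ0, hφ1] at h01
  linarith

set_option maxHeartbeats 2000000 in
theorem nsa_stmt_6 (n : ℕ) (hn : 1 ≤ n)
    (f : EuclideanSpace ℝ (Fin n) → ℝ)
    (hconv : ConvexOn ℝ Set.univ f)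
    (hdiff : Differentiable ℝ f)
    (L : ℝ) (hL : 0 < L)
    (hlip : ∀ x x' : EuclideanSpace ℝ (Fin n),
      ‖gradient f x - gradient f x'‖ ≤ L * ‖x - x'‖)
    (xstar : EuclideanSpace ℝ (Fin n)) (hmin : ∀ u, f xstar ≤ f u)
    (p : ℝ) (hp : 3 ≤ p)
    (η : ℝ) (hη0 : 0 < η) (hη : η ≤ 2 / (3 * L))
    (α : ℕ → ℝ) (hα : ∀ k : ℕ, α k = p / (k + p))
    (x y z : ℕ → EuclideanSpace ℝ (Fin n))
    (hx0 : x 0 = z 0)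
    (hy : ∀ k, y k = (1 - α k) • x k + α k • z k)
    (hx : ∀ k, x (k + 1) =
      if f (y k - η • gradient f (y k)) ≤ f (x k - η • gradient f (x k))
      then y k - η • gradient f (y k)
      else x k - η • gradient f (x k))
    (hz : ∀ k, z (k + 1) = z k - (η / α k) • gradient f (y k))
    :
    Filter.Tendsto (fun k : ℕ => (k : ℝ) ^ 2 * (f (x k) - f xstar))
      Filter.atTop (nhds 0) := by
  have hp0 : (0:ℝ) < p := by linarith
  have hLη : L * η ≤ 2/3 := by
    have h3L : (0:ℝ) < 3 * L := by linarith
    rw [le_div_iff₀ h3L] at hη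
    nlinarith
  set c : ℝ := η * (1 - L * η / 2) with hc
  have hc_pos : 0 < c := by nlinarith
  have hη2c : η^2 - 2*η*c ≤ 0 := by rw [hc]; nlinarith [sq_nonneg η]
  set δ : ℕ → ℝ := fun k => f (x k) - f xstar with hδdef
  have hδ_nonneg : ∀ k, 0 ≤ δ k := fun k => by simp [hδdef, hmin (x k)]
  -- descent step property
  have hdesc : ∀ u : EuclideanSpace ℝ (Fin n),
      f (u - η • gradient f u) ≤ f u - c * ‖gradient f u‖^2 := by
    intro u
    have h := grad_descent hdiff hL.le hlip u (u - η • gradient f u)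
    have h1 : (u - η • gradient f u) - u = -(η • gradient f u) := by abel
    rw [h1] at h
    rw [inner_neg_right, real_inner_smul_right, real_inner_self_eq_norm_sq] at h
    rw [norm_neg, norm_smul, Real.norm_eq_abs, abs_of_pos hη0, mul_pow] at h
    rw [hc]; nlinarith [h]
  have hx_le : ∀ k, f (x (k+1)) ≤ f (y k - η • gradient f (y k)) ∧
      f (x (k+1)) ≤ f (x k - η • gradient f (x k)) := by
    intro k
    rw [hx k]
    split_ifs with h
    · exact ⟨le_refl _, h⟩
    · exact ⟨le_of_not_ge h, le_refl _⟩
  have hδ_mono : ∀ k, δ (k+1) ≤ δ k := by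
    intro k
    have h1 := (hx_le k).2
    have h2 := hdesc (x k)
    have h3 : 0 ≤ c * ‖gradient f (x k)‖^2 := by positivity
    simp only [hδdef]
    linarith
  have h5 : ∀ k, δ (k+1) ≤ (f (y k) - f xstar) - c * ‖gradient f (y k)‖^2 := by
    intro k
    have h1 := (hx_le k).1
    have h2 := hdesc (y k)
    simp only [hδdef]
    linarith
  -- Lyapunov function
  set r : ℕ → ℝ := fun k => ‖z k - xstar‖^2 with hrdef
  set Lyap : ℕ → ℝ := fun k => 2*η*((k:ℝ)+p-1)^2 * δ k + p^2 * r k with hLdef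
  have hL_nonneg : ∀ k, 0 ≤ Lyap k := by
    intro k
    have := hδ_nonneg k
    have : (0:ℝ) ≤ r k := by positivity
    simp only [hLdef]
    positivity
  have hstep : ∀ k, Lyap (k+1) + 2*η*((k:ℝ) * δ k) ≤ Lyap k := by
    intro k
    set K : ℝ := (k:ℝ) with hKdef
    have hK : 0 ≤ K := Nat.cast_nonneg k
    set s : ℝ := K + p with hsdef
    have hs_pos : 0 < s := by simp only [hsdef]; linarith
    have hsp : p ≤ s := by simp only [hsdef]; linarith
    have hαk : α k = p / s := by rw [hα k]
    have hαk_pos : 0 < α k := by rw [hαk]; positivity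
    set G : EuclideanSpace ℝ (Fin n) := gradient f (y k) with hGdef
    set N : ℝ := ‖G‖^2 with hNdef
    have hN : 0 ≤ N := by positivity
    set sy : ℝ := f (y k) - f xstar with hsydef
    set I : ℝ := (inner ℝ G (z k - xstar) : ℝ) with hIdef
    set J1 : ℝ := (inner ℝ G (y k - xstar) : ℝ) with hJ1def
    set J2 : ℝ := (inner ℝ G (y k - x k) : ℝ) with hJ2def
    -- z decomposition
    have hz_eq : z k - xstar = (y k - xstar) + ((s - p)/p) • (y k - x k) := by
      have h := hy k
      rw [hαk] at h
      have h2 : z k = (s/p) • y k - ((s-p)/p) • x k := by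
        have h3 := congrArg (fun w => (s/p) • w) h
        simp only [smul_add, smul_smul] at h3
        rw [div_mul_div_comm] at h3
        have e1 : s / p * (1 - p / s) = (s - p)/p := by field_simp
        have e2 : s * p / (p * s) = 1 := by field_simp
        rw [e1, e2, one_smul] at h3
        have : (s/p) • y k - ((s-p)/p) • x k = ((s-p)/p) • x k + z k - ((s-p)/p) • x k := by
          rw [← h3]
        rw [this]; abel
      rw [h2]
      have hsp' : s / p = 1 + (s - p)/p := by field_simp; ring
      rw [hsp']
      module
    have hI' : s*p*I = s*p*J1 + (s^2 - s*p)*J2 := by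
      rw [hIdef, hz_eq, inner_add_right, real_inner_smul_right, ← hJ1def, ← hJ2def]
      field_simp
    -- convexity bounds
    have hcv1 : sy ≤ J1 := by
      have h := grad_convex_ineq hconv hdiff (y k) xstar
      have : (inner ℝ G (xstar - y k) : ℝ) = -J1 := by
        rw [hJ1def, ← inner_neg_right]; congr 1; abel
      rw [this] at h
      simp only [hsydef]; linarith
    have hcv2 : sy - δ k ≤ J2 := by
      have h := grad_convex_ineq hconv hdiff (y k) (x k)
      have : (inner ℝ G (x k - y k) : ℝ) = -J2 := by
        rw [hJ2def, ← inner_neg_right]; congr 1; abel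
      rw [this] at h
      simp only [hsydef, hδdef]; linarith
    have h6' : s^2*sy - (s^2 - s*p)*(δ k) ≤ s*p*I := by
      have p1 : (s*p)*sy ≤ (s*p)*J1 :=
        mul_le_mul_of_nonneg_left hcv1 (by positivity)
      have p2 : (s^2 - s*p)*(sy - δ k) ≤ (s^2 - s*p)*J2 :=
        mul_le_mul_of_nonneg_left hcv2 (by nlinarith)
      linarith [p1, p2, hI']
    -- r recursion
    have hμ : η / α k = η * s / p := by rw [hαk]; field_simp
    have hz' : z (k+1) - xstar = (z k - xstar) - (η * s / p) • G := by
      rw [hz k, hμ, hGdef]; abel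
    have h7 : p^2 * r (k+1) = p^2 * r k - 2*η*s*p*I + η^2*s^2*N := by
      simp only [hrdef]
      rw [hz', norm_sub_sq_real, real_inner_smul_right, norm_smul, Real.norm_eq_abs,
        abs_of_pos (by positivity : (0:ℝ) < η * s / p), mul_pow]
      rw [real_inner_comm, ← hIdef, ← hNdef]
      field_simp
    -- combine
    have hδ1 := hδ_nonneg (k+1)
    have hδ0 := hδ_nonneg k
    have h5k := h5 k
    rw [← hGdef, ← hNdef, ← hsydef] at h5k
    have A1 : 2*η*s^2*(δ (k+1)) ≤ 2*η*s^2*sy - 2*η*c*s^2*N := by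
      have := mul_le_mul_of_nonneg_left h5k (by positivity : (0:ℝ) ≤ 2*η*s^2)
      nlinarith [this]
    have A2 : p^2 * r (k+1) ≤ p^2 * r k - 2*η*(s^2*sy - (s^2 - s*p)*(δ k)) + η^2*s^2*N := by
      rw [h7]
      have := mul_le_mul_of_nonneg_left h6' (by positivity : (0:ℝ) ≤ 2*η)
      nlinarith [this]
    have A3 : (η^2 - 2*η*c)*(s^2*N) ≤ 0 :=
      mul_nonpos_of_nonpos_of_nonneg hη2c (by positivity)
    have e4 : (s^2 - s*p) + K ≤ (K + p - 1)^2 := by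
      simp only [hsdef]
      nlinarith [mul_nonneg hK (by linarith : (0:ℝ) ≤ p - 3), sq_nonneg (p-1)]
    have A4 : (2*η*δ k) * ((s^2 - s*p) + K) ≤ (2*η*δ k) * (K + p - 1)^2 :=
      mul_le_mul_of_nonneg_left e4 (by positivity)
    have hB1 : ((↑(k+1):ℝ) + p - 1)^2 = s^2 := by
      push_cast
      simp only [hsdef, hKdef]
      ring
    simp only [hLdef, hB1, ← hKdef]
    linarith [A1, A2, A3, A4]
  -- partial sums bounded
  have hsum : ∀ K : ℕ, Lyap K + 2*η*(∑ j ∈ Finset.range K, (j:ℝ) * δ j) ≤ Lyap 0 := by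
    intro K
    induction K with
    | zero => simp
    | succ m ih =>
      rw [Finset.sum_range_succ]
      have := hstep m
      linarith
  have hbound : ∀ K : ℕ, ∑ j ∈ Finset.range K, (j:ℝ) * δ j ≤ Lyap 0 / (2*η) := by
    intro K
    have h1 := hsum K
    have h2 := hL_nonneg K
    rw [le_div_iff₀ (by positivity : (0:ℝ) < 2*η)]
    linarith
  have hsummable : Summable (fun j : ℕ => (j:ℝ) * δ j) :=
    summable_of_sum_range_le (fun j => mul_nonneg (Nat.cast_nonneg j) (hδ_nonneg j)) hbound
  set S : ℕ → ℝ := fun K => ∑ j ∈ Finset.range K, (j:ℝ) * δ j with hSdef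
  obtain ⟨ℓ, hℓ⟩ := hsummable
  have hS_tendsto : Filter.Tendsto S Filter.atTop (nhds ℓ) := hℓ.tendsto_sum_nat
  -- δ is antitone
  have hδ_anti : Antitone δ := antitone_nat_of_succ_le hδ_mono
  -- key bound
  have hkey : ∀ k : ℕ, (k:ℝ)^2 * δ k ≤ 4 * (S (k+1) - S (k/2+1)) := by
    intro k
    have hm : k/2 + 1 ≤ k + 1 := by omega
    have hsub : S (k+1) - S (k/2+1) = ∑ j ∈ Finset.Ico (k/2+1) (k+1), (j:ℝ) * δ j := by
      rw [hSdef]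
      exact (Finset.sum_Ico_eq_sub _ hm).symm
    have hterm : ∀ j ∈ Finset.Ico (k/2+1) (k+1),
        ((k/2+1 : ℕ):ℝ) * δ k ≤ (j:ℝ) * δ j := by
      intro j hj
      rw [Finset.mem_Ico] at hj
      have hj1 : ((k/2+1:ℕ):ℝ) ≤ (j:ℝ) := by exact_mod_cast hj.1
      have hj2 : δ k ≤ δ j := hδ_anti (by omega : j ≤ k)
      exact mul_le_mul hj1 hj2 (hδ_nonneg k) (Nat.cast_nonneg j)
    have hcard := Finset.card_nsmul_le_sum _ _ _ hterm
    rw [Nat.card_Ico] at hcard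
    rw [nsmul_eq_mul] at hcard
    have hc1 : (k:ℝ) ≤ 2 * ((k + 1 - (k/2+1) : ℕ) : ℝ) := by
      have : k ≤ 2 * (k + 1 - (k/2+1)) := by omega
      exact_mod_cast this
    have hc2 : (k:ℝ) ≤ 2 * ((k/2+1 : ℕ):ℝ) := by
      have : k ≤ 2 * (k/2+1) := by omega
      exact_mod_cast this
    rw [hsub]
    have hprod : (k:ℝ) * (k:ℝ) * δ k
        ≤ (2 * ((k + 1 - (k/2+1) : ℕ):ℝ)) * (2 * ((k/2+1 : ℕ):ℝ)) * δ k :=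
      mul_le_mul_of_nonneg_right
        (mul_le_mul hc1 hc2 (by positivity) (by positivity)) (hδ_nonneg k)
    nlinarith [hcard, hprod]
  -- squeeze
  have hup : Filter.Tendsto (fun k : ℕ => 4 * (S (k+1) - S (k/2+1))) Filter.atTop (nhds 0) := by
    have h1 : Filter.Tendsto (fun k : ℕ => S (k+1)) Filter.atTop (nhds ℓ) :=
      hS_tendsto.comp (Filter.tendsto_add_atTop_nat 1)
    have h2 : Filter.Tendsto (fun k : ℕ => S (k/2+1)) Filter.atTop (nhds ℓ) := by
      refine hS_tendsto.comp (Filter.tendsto_atTop_atTop.mpr fun b => ⟨2*b, fun a ha => by omega⟩)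
    have := (h1.sub h2).const_mul (4:ℝ)
    simpa using this
  refine tendsto_of_tendsto_of_tendsto_of_le_of_le tendsto_const_nhds hup ?_ ?_
  · intro k
    exact mul_nonneg (sq_nonneg _) (hδ_nonneg k)
  · intro k
    exact hkey k
end

section
/- The NSA iterates satisfy liminf_{k→∞} k²·(log k)·(log log k)·(f(x_k) − f*) = 0. -/
open Filter Real Set Finset

section NSAAux

variable {F : Type*} [NormedAddCommGroup F] [InnerProductSpace ℝ F] [CompleteSpace F]

lemma nsa_line_hasDerivAt (f : F → ℝ) (hdiff : Differentiable ℝ f) (a d : F) (t : ℝ) :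
    HasDerivAt (fun s : ℝ => f (a + s • d)) (inner ℝ (gradient f (a + t • d)) d : ℝ) t := by
  have h1 : HasDerivAt (fun s : ℝ => a + s • d) d t := by
    simpa using ((hasDerivAt_id t).smul_const d).const_add a
  have h2 := (hdiff (a + t • d)).hasGradientAt
  rw [hasGradientAt_iff_hasFDerivAt] at h2
  have h3 := h2.comp_hasDerivAt t h1
  simpa [InnerProductSpace.toDual_apply_apply, Function.comp_def] using h3

lemma nsa_convex_grad_ineq (f : F → ℝ) (hconv : ConvexOn ℝ Set.univ f)
    (hdiff : Differentiable ℝ f) (a b : F) :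
    f a + (inner ℝ (gradient f a) (b - a) : ℝ) ≤ f b := by
  set d := b - a with hd
  have hg : ConvexOn ℝ Set.univ (fun t : ℝ => f (a + t • d)) := by
    have := hconv.comp_affineMap (AffineMap.lineMap a b : ℝ →ᵃ[ℝ] F)
    simpa [Function.comp_def, AffineMap.lineMap_apply_module', hd, add_comm] using this
  have hder : HasDerivAt (fun t : ℝ => f (a + t • d)) (inner ℝ (gradient f a) d : ℝ) 0 := by
    simpa using nsa_line_hasDerivAt f hdiff a d 0
  have := hg.le_slope_of_hasDerivAt (Set.mem_univ (0:ℝ)) (Set.mem_univ (1:ℝ)) zero_lt_one hder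
  rw [slope_def_field] at this
  simp only [one_smul, zero_smul, add_zero, sub_zero, div_one, hd] at this
  have hb : a + (b - a) = b := by abel
  rw [hb] at this
  linarith

lemma nsa_smooth_ineq (f : F → ℝ) (hdiff : Differentiable ℝ f) (L : ℝ)
    (hlip : ∀ u v : F, ‖gradient f u - gradient f v‖ ≤ L * ‖u - v‖) (a b : F) :
    f b ≤ f a + (inner ℝ (gradient f a) (b - a) : ℝ) + L / 2 * ‖b - a‖ ^ 2 := by
  set d := b - a with hd
  set C : ℝ := inner ℝ (gradient f a) d with hC
  set K : ℝ := L / 2 * ‖d‖ ^ 2 with hK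
  set h : ℝ → ℝ := fun t => f (a + t • d) - t * C - K * t ^ 2 with hh
  have hder : ∀ t : ℝ, HasDerivAt h ((inner ℝ (gradient f (a + t • d)) d : ℝ) - C - K * (2 * t)) t := by
    intro t
    have h1 := nsa_line_hasDerivAt f hdiff a d t
    have h2 : HasDerivAt (fun t : ℝ => t * C) C t := hasDerivAt_mul_const C
    have h3 : HasDerivAt (fun t : ℝ => K * t ^ 2) (K * (2 * t)) t := by
      simpa using ((hasDerivAt_pow 2 t).const_mul K)
    exact (h1.sub h2).sub h3
  have hanti : AntitoneOn h (Set.Ici (0:ℝ)) := by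
    apply antitoneOn_of_deriv_nonpos (convex_Ici 0)
    · exact fun t _ => ((hder t).continuousAt).continuousWithinAt
    · intro t ht
      exact ((hder t).differentiableAt).differentiableWithinAt
    · intro t ht
      rw [interior_Ici] at ht
      rw [(hder t).deriv]
      have e1 : (inner ℝ (gradient f (a + t • d)) d : ℝ) - C
          = (inner ℝ (gradient f (a + t • d) - gradient f a) d : ℝ) := by
        rw [inner_sub_left]
      have e2 : (inner ℝ (gradient f (a + t • d) - gradient f a) d : ℝ)
          ≤ ‖gradient f (a + t • d) - gradient f a‖ * ‖d‖ := real_inner_le_norm _ _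
      have e3 : ‖gradient f (a + t • d) - gradient f a‖ ≤ L * (t * ‖d‖) := by
        have := hlip (a + t • d) a
        simpa [norm_smul, abs_of_nonneg (le_of_lt (Set.mem_Ioi.1 ht))] using this
      have ht0 : (0:ℝ) ≤ t := le_of_lt ht
      have hdn : (0:ℝ) ≤ ‖d‖ := norm_nonneg _
      nlinarith [mul_le_mul_of_nonneg_right e3 hdn]
  have h01 := hanti (Set.mem_Ici.2 (le_refl (0:ℝ))) (Set.mem_Ici.2 zero_le_one) zero_le_one
  have hb : a + (1:ℝ) • d = b := by rw [one_smul, hd]; abel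
  simp only [hh, hb, zero_smul, add_zero, one_pow, mul_one, zero_pow, mul_zero, zero_mul,
    sub_zero, ne_eq, OfNat.ofNat_ne_zero, not_false_iff] at h01
  linarith

lemma nsa_descent (f : F → ℝ) (hdiff : Differentiable ℝ f) (L : ℝ)
    (hlip : ∀ u v : F, ‖gradient f u - gradient f v‖ ≤ L * ‖u - v‖) (η : ℝ) (hη : 0 ≤ η)
    (a : F) :
    f (a - η • gradient f a) ≤ f a - (η - L * η ^ 2 / 2) * ‖gradient f a‖ ^ 2 := by
  have := nsa_smooth_ineq f hdiff L hlip a (a - η • gradient f a)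
  have e1 : a - η • gradient f a - a = -(η • gradient f a) := by abel
  rw [e1] at this
  have e2 : (inner ℝ (gradient f a) (-(η • gradient f a)) : ℝ) = -(η * ‖gradient f a‖ ^ 2) := by
    rw [inner_neg_right, real_inner_smul_right, real_inner_self_eq_norm_sq]
  have e3 : ‖-(η • gradient f a)‖ ^ 2 = η ^ 2 * ‖gradient f a‖ ^ 2 := by
    rw [norm_neg, norm_smul, mul_pow, Real.norm_eq_abs, abs_of_nonneg hη]
  rw [e2, e3] at this
  nlinarith

end NSAAux

lemma nsa_log_sub_log_le {A B : ℝ} (hB : 0 < B) (hA : 0 < A) :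
    Real.log A - Real.log B ≤ (A - B) / B := by
  rw [← Real.log_div hA.ne' hB.ne']
  have h := Real.log_le_sub_one_of_pos (div_pos hA hB)
  have : A / B - 1 = (A - B) / B := by field_simp
  linarith

lemma nsa_one_lt_log {t : ℝ} (ht : 3 ≤ t) : 1 < Real.log t := by
  rw [Real.lt_log_iff_exp_lt (by linarith)]
  calc Real.exp 1 < 2.7182818286 := Real.exp_one_lt_d9
    _ < 3 := by norm_num
    _ ≤ t := ht

lemma nsa_tele {t : ℝ} (ht : 3 ≤ t) :
    Real.log (Real.log (Real.log (t + 1))) - Real.log (Real.log (Real.log t))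
      ≤ 1 / (t * Real.log t * Real.log (Real.log t)) := by
  have ht0 : (0:ℝ) < t := by linarith
  have hlt : 1 < Real.log t := nsa_one_lt_log ht
  have hlt0 : 0 < Real.log t := by linarith
  have hllt : 0 < Real.log (Real.log t) := Real.log_pos hlt
  have hmono1 : Real.log t ≤ Real.log (t + 1) := Real.log_le_log ht0 (by linarith)
  have hlt1 : 0 < Real.log (t + 1) := by linarith
  have hmono2 : Real.log (Real.log t) ≤ Real.log (Real.log (t + 1)) :=
    Real.log_le_log hlt0 hmono1
  have hllt1 : 0 < Real.log (Real.log (t + 1)) := by linarith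
  have s1 : Real.log (t + 1) - Real.log t ≤ 1 / t := by
    have := nsa_log_sub_log_le ht0 (by linarith : (0:ℝ) < t + 1)
    simpa using this
  have s2 : Real.log (Real.log (t + 1)) - Real.log (Real.log t) ≤ 1 / (t * Real.log t) := by
    have h := nsa_log_sub_log_le hlt0 hlt1
    have h2 : (Real.log (t + 1) - Real.log t) / Real.log t ≤ (1 / t) / Real.log t := by
      gcongr
    calc Real.log (Real.log (t + 1)) - Real.log (Real.log t)
        ≤ (Real.log (t + 1) - Real.log t) / Real.log t := h
      _ ≤ (1 / t) / Real.log t := h2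
      _ = 1 / (t * Real.log t) := by rw [div_div]
  calc Real.log (Real.log (Real.log (t + 1))) - Real.log (Real.log (Real.log t))
      ≤ (Real.log (Real.log (t + 1)) - Real.log (Real.log t)) / Real.log (Real.log t) :=
        nsa_log_sub_log_le hllt hllt1
    _ ≤ (1 / (t * Real.log t)) / Real.log (Real.log t) := by gcongr
    _ = 1 / (t * Real.log t * Real.log (Real.log t)) := by rw [div_div]

lemma nsa_sum_ge (N M : ℕ) (hN : 3 ≤ N) (hNM : N ≤ M) :
    Real.log (Real.log (Real.log M)) - Real.log (Real.log (Real.log N))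
      ≤ ∑ k ∈ Finset.Ico N M, 1 / ((k:ℝ) * Real.log k * Real.log (Real.log k)) := by
  induction M, hNM using Nat.le_induction with
  | base => simp
  | succ M hNM ih =>
    rw [Finset.sum_Ico_succ_top hNM]
    have hM3 : (3:ℝ) ≤ (M:ℝ) := by exact_mod_cast hN.trans hNM
    have h := nsa_tele hM3
    have hcast : ((M:ℝ) + 1) = ((M + 1 : ℕ) : ℝ) := by push_cast; ring
    rw [hcast] at h
    linarith

lemma nsa_div (N : ℕ) (hN : 3 ≤ N) (C : ℝ) :
    ∃ M : ℕ, N ≤ M ∧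
      C ≤ ∑ k ∈ Finset.Ico N M, 1 / ((k:ℝ) * Real.log k * Real.log (Real.log k)) := by
  have htend : Tendsto (fun M : ℕ => Real.log (Real.log (Real.log M))) atTop atTop :=
    Real.tendsto_log_atTop.comp (Real.tendsto_log_atTop.comp
      (Real.tendsto_log_atTop.comp tendsto_natCast_atTop_atTop))
  have := htend.eventually_ge_atTop (C + Real.log (Real.log (Real.log N)))
  obtain ⟨M0, hM0⟩ := (this.and (eventually_ge_atTop N)).exists
  refine ⟨M0, hM0.2, ?_⟩
  have := nsa_sum_ge N M0 hN hM0.2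
  have h1 := hM0.1
  linarith

lemma nsa_onestep_arith {η c s I G V Ak Ak1 Z kr p : ℝ}
    (hη0 : 0 < η) (hc2 : η ≤ 2 * c) (hG : 0 ≤ G) (hAk : 0 ≤ Ak)
    (hp : 3 ≤ p) (hk : 0 ≤ kr) (hs : s = (kr + p) / p)
    (h1 : s * V - (s - 1) * Ak ≤ I)
    (h2 : Ak1 + c * G ≤ V) :
    Z - 2 * (η * s) * I + (η * s) ^ 2 * G + 2 * η * ((kr + p) ^ 2 / p ^ 2) * Ak1
      + 2 * η / p ^ 2 * kr * Ak
      ≤ Z + 2 * η * ((kr + p - 1) ^ 2 / p ^ 2) * Ak := by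
  have hp0 : (0:ℝ) < p := by linarith
  have hs0 : 0 < s := by rw [hs]; positivity
  have hs1 : 1 ≤ s := by rw [hs, le_div_iff₀ hp0]; linarith
  have hs2 : s ^ 2 = (kr + p) ^ 2 / p ^ 2 := by rw [hs, div_pow]
  have hss : s * (s - 1) = kr * (kr + p) / p ^ 2 := by
    rw [hs]; field_simp; ring
  have T1 : 2 * (η * s) * (s * V - (s - 1) * Ak) ≤ 2 * (η * s) * I :=
    mul_le_mul_of_nonneg_left h1 (by positivity)
  have T2 : 2 * (η * s ^ 2) * (Ak1 + c * G) ≤ 2 * (η * s ^ 2) * V :=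
    mul_le_mul_of_nonneg_left h2 (by positivity)
  have T3 : 0 ≤ (2 * c - η) * (η * (s ^ 2 * G)) :=
    mul_nonneg (by linarith) (mul_nonneg hη0.le (mul_nonneg (sq_nonneg s) hG))
  have T4 : kr * (kr + p) + kr ≤ (kr + p - 1) ^ 2 := by nlinarith
  have T5 : 2 * η / p ^ 2 * (kr * (kr + p) + kr) * Ak
      ≤ 2 * η / p ^ 2 * (kr + p - 1) ^ 2 * Ak := by
    apply mul_le_mul_of_nonneg_right _ hAk
    exact mul_le_mul_of_nonneg_left T4 (by positivity)
  have E1 : 2 * η * s ^ 2 * Ak1 = 2 * η * ((kr + p) ^ 2 / p ^ 2) * Ak1 := by rw [hs2]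
  have E2 : 2 * η * (s * (s - 1)) * Ak = 2 * η * (kr * (kr + p) / p ^ 2) * Ak := by rw [hss]
  have key : -(2 * (η * s)) * I + (η * s) ^ 2 * G + 2 * η * s ^ 2 * Ak1
      ≤ 2 * η * (s * (s - 1)) * Ak := by nlinarith [T1, T2, T3]
  have key2 : 2 * η * (s * (s - 1)) * Ak + 2 * η / p ^ 2 * kr * Ak
      ≤ 2 * η * ((kr + p - 1) ^ 2 / p ^ 2) * Ak := by
    rw [E2]
    calc 2 * η * (kr * (kr + p) / p ^ 2) * Ak + 2 * η / p ^ 2 * kr * Ak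
        = 2 * η / p ^ 2 * (kr * (kr + p) + kr) * Ak := by ring
      _ ≤ 2 * η / p ^ 2 * (kr + p - 1) ^ 2 * Ak := T5
      _ = 2 * η * ((kr + p - 1) ^ 2 / p ^ 2) * Ak := by ring
  rw [← E1] at *
  linarith [key, key2]

set_option maxHeartbeats 1000000 in
theorem nsa_stmt_7 (n : ℕ) (hn : 1 ≤ n)
    (f : EuclideanSpace ℝ (Fin n) → ℝ)
    (hconv : ConvexOn ℝ Set.univ f)
    (hdiff : Differentiable ℝ f)
    (L : ℝ) (hL : 0 < L)
    (hlip : ∀ x x' : EuclideanSpace ℝ (Fin n),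
      ‖gradient f x - gradient f x'‖ ≤ L * ‖x - x'‖)
    (xstar : EuclideanSpace ℝ (Fin n)) (hmin : ∀ u, f xstar ≤ f u)
    (p : ℝ) (hp : 3 ≤ p)
    (η : ℝ) (hη0 : 0 < η) (hη : η ≤ 2 / (3 * L))
    (α : ℕ → ℝ) (hα : ∀ k : ℕ, α k = p / (k + p))
    (x y z : ℕ → EuclideanSpace ℝ (Fin n))
    (hx0 : x 0 = z 0)
    (hy : ∀ k, y k = (1 - α k) • x k + α k • z k)
    (hx : ∀ k, x (k + 1) =
      if f (y k - η • gradient f (y k)) ≤ f (x k - η • gradient f (x k))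
      then y k - η • gradient f (y k)
      else x k - η • gradient f (x k))
    (hz : ∀ k, z (k + 1) = z k - (η / α k) • gradient f (y k))
    :
    Filter.liminf
      (fun k : ℕ =>
        (k : ℝ) ^ 2 * Real.log k * Real.log (Real.log k) * (f (x k) - f xstar))
      Filter.atTop = 0 := by
  have hp0 : (0:ℝ) < p := by linarith
  have hLη : L * η ≤ 2 / 3 := by
    rw [le_div_iff₀ (by positivity)] at hη
    nlinarith
  have hc2 : η ≤ 2 * (η - L * η ^ 2 / 2) := by nlinarith
  have hA : ∀ k : ℕ, 0 ≤ f (x k) - f xstar := fun k => sub_nonneg.2 (hmin _)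
  have hstep : ∀ k : ℕ, f (x (k + 1))
      ≤ f (y k) - (η - L * η ^ 2 / 2) * ‖gradient f (y k)‖ ^ 2 := by
    intro k
    have hd := nsa_descent f hdiff L hlip η hη0.le (y k)
    rw [hx k]
    split_ifs with h
    · exact hd
    · push_neg at h
      linarith
  obtain ⟨Φ, hΦdef⟩ : ∃ Φ : ℕ → ℝ, Φ = fun k =>
      ‖z k - xstar‖ ^ 2 + 2 * η * (((k:ℝ) + p - 1) ^ 2 / p ^ 2) * (f (x k) - f xstar) :=
    ⟨_, rfl⟩
  have hΦ0 : ∀ k, 0 ≤ Φ k := by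
    intro k
    have h1 : (0:ℝ) ≤ ‖z k - xstar‖ ^ 2 := sq_nonneg _
    have h2 : (0:ℝ) ≤ 2 * η * (((k:ℝ) + p - 1) ^ 2 / p ^ 2) :=
      mul_nonneg (by linarith) (div_nonneg (sq_nonneg _) (sq_nonneg _))
    have h3 := mul_nonneg h2 (hA k)
    simp only [hΦdef]
    linarith
  have hE : ∀ k : ℕ, Φ (k + 1) + 2 * η / p ^ 2 * (k:ℝ) * (f (x k) - f xstar) ≤ Φ k := by
    intro k
    have hkp : (0:ℝ) < (k:ℝ) + p := by positivity
    set s : ℝ := ((k:ℝ) + p) / p with hsdef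
    have hs0 : 0 < s := by rw [hsdef]; positivity
    have hαk : α k = 1 / s := by rw [hα k, hsdef, one_div_div]
    have hη' : η / α k = η * s := by rw [hαk, one_div, div_inv_eq_mul]
    have hz' : z (k + 1) - xstar = z k - xstar - (η * s) • gradient f (y k) := by
      rw [hz k, hη']; abel
    have hzk : z k - xstar = y k - xstar + (s - 1) • (y k - x k) := by
      have h := hy k
      rw [hαk] at h
      have h2 : s • y k = (s - 1) • x k + z k := by
        rw [h, smul_add, smul_smul, smul_smul]
        have e1 : s * (1 - 1 / s) = s - 1 := by field_simp
        have e2 : s * (1 / s) = 1 := by field_simp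
        rw [e1, e2, one_smul]
      have h3 : z k = s • y k - (s - 1) • x k := by rw [h2]; abel
      rw [h3]
      simp only [smul_sub, sub_smul, one_smul]
      abel
    have hkey : ∀ v, f (y k) - f v ≤ (inner ℝ (gradient f (y k)) (y k - v) : ℝ) := by
      intro v
      have h := nsa_convex_grad_ineq f hconv hdiff (y k) v
      have e : (inner ℝ (gradient f (y k)) (v - y k) : ℝ)
          = -(inner ℝ (gradient f (y k)) (y k - v) : ℝ) := by
        rw [← inner_neg_right, neg_sub]
      linarith
    have hs1 : (1:ℝ) ≤ s := by
      rw [hsdef, le_div_iff₀ hp0]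
      have := Nat.cast_nonneg (α := ℝ) k
      linarith
    have h1 : s * (f (y k) - f xstar) - (s - 1) * (f (x k) - f xstar)
        ≤ (inner ℝ (gradient f (y k)) (z k - xstar) : ℝ) := by
      have ha := hkey xstar
      have hb := hkey (x k)
      have hI : (inner ℝ (gradient f (y k)) (z k - xstar) : ℝ)
          = (inner ℝ (gradient f (y k)) (y k - xstar) : ℝ)
            + (s - 1) * (inner ℝ (gradient f (y k)) (y k - x k) : ℝ) := by
        rw [hzk, inner_add_right, real_inner_smul_right]
      nlinarith [mul_le_mul_of_nonneg_left hb (by linarith : (0:ℝ) ≤ s - 1)]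
    have hnorm : ‖z (k + 1) - xstar‖ ^ 2
        = ‖z k - xstar‖ ^ 2
          - 2 * (η * s) * (inner ℝ (gradient f (y k)) (z k - xstar) : ℝ)
          + (η * s) ^ 2 * ‖gradient f (y k)‖ ^ 2 := by
      rw [hz', @norm_sub_sq_real, real_inner_smul_right, norm_smul, mul_pow,
        Real.norm_eq_abs, sq_abs, real_inner_comm]
      ring
    have h2 : f (x (k + 1)) - f xstar
        + (η - L * η ^ 2 / 2) * ‖gradient f (y k)‖ ^ 2 ≤ f (y k) - f xstar := by
      have := hstep k
      linarith
    have harith := nsa_onestep_arith (Z := ‖z k - xstar‖ ^ 2) hη0 hc2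
      (sq_nonneg ‖gradient f (y k)‖) (hA k) hp (Nat.cast_nonneg k) hsdef h1 h2
    simp only [hΦdef]
    have hcast : ((k + 1 : ℕ) : ℝ) + p - 1 = (k:ℝ) + p := by push_cast; ring
    rw [hcast, hnorm]
    linarith [harith]
  have hsum : ∀ K : ℕ,
      (∑ j ∈ Finset.range K, 2 * η / p ^ 2 * (j:ℝ) * (f (x j) - f xstar)) + Φ K ≤ Φ 0 := by
    intro K
    induction K with
    | zero => simp
    | succ K ih =>
      rw [Finset.sum_range_succ]
      have := hE K
      linarith
  have hBsum : ∀ K : ℕ,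
      (∑ j ∈ Finset.range K, 2 * η / p ^ 2 * (j:ℝ) * (f (x j) - f xstar)) ≤ Φ 0 := by
    intro K
    have := hsum K
    have := hΦ0 K
    linarith
  obtain ⟨u, hudef⟩ : ∃ u : ℕ → ℝ, u = fun k : ℕ =>
      (k : ℝ) ^ 2 * Real.log k * Real.log (Real.log k) * (f (x k) - f xstar) := ⟨_, rfl⟩
  suffices hgoal : Filter.liminf u Filter.atTop = 0 by rw [hudef] at hgoal; exact hgoal
  have hupos : ∀ k : ℕ, 3 ≤ k → 0 ≤ u k := by
    intro k hk
    have hk3 : (3:ℝ) ≤ (k:ℝ) := by exact_mod_cast hk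
    have l1 : 1 < Real.log k := nsa_one_lt_log hk3
    have l2 : 0 < Real.log (Real.log k) := Real.log_pos l1
    have h4 := hA k
    simp only [hudef]
    exact mul_nonneg (mul_nonneg (mul_nonneg (sq_nonneg _) (by linarith)) l2.le) h4
  have hw : ∀ k : ℕ, 3 ≤ k → 0 < (k:ℝ) * Real.log k * Real.log (Real.log k) := by
    intro k hk
    have hk3 : (3:ℝ) ≤ (k:ℝ) := by exact_mod_cast hk
    have l1 : 1 < Real.log k := nsa_one_lt_log hk3
    have l2 : 0 < Real.log (Real.log k) := Real.log_pos l1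
    exact mul_pos (mul_pos (by linarith) (by linarith)) l2
  have hq2 : (0:ℝ) < 2 * η / p ^ 2 := div_pos (by linarith) (pow_pos hp0 2)
  have hfreq : ∀ ε : ℝ, 0 < ε → ∀ N : ℕ, ∃ k, N ≤ k ∧ u k ≤ ε := by
    intro ε hε N
    by_contra hcon
    push_neg at hcon
    obtain ⟨M, hM1, hM2⟩ := nsa_div (max N 3) (le_max_right N 3)
      ((Φ 0 + 1) / (2 * η / p ^ 2 * ε))
    have hterm : ∀ j ∈ Finset.Ico (max N 3) M,
        2 * η / p ^ 2 * ε * (1 / ((j:ℝ) * Real.log j * Real.log (Real.log j)))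
          ≤ 2 * η / p ^ 2 * (j:ℝ) * (f (x j) - f xstar) := by
      intro j hj
      rw [Finset.mem_Ico] at hj
      have hj3 : 3 ≤ j := le_trans (le_max_right N 3) hj.1
      have hjN : N ≤ j := le_trans (le_max_left N 3) hj.1
      have hu := hcon j hjN
      have hwj := hw j hj3
      have heq : u j = ((j:ℝ) * (f (x j) - f xstar))
          * ((j:ℝ) * Real.log j * Real.log (Real.log j)) := by
        simp only [hudef]; ring
      have h5 : ε ≤ ((j:ℝ) * (f (x j) - f xstar))
          * ((j:ℝ) * Real.log j * Real.log (Real.log j)) := by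
        rw [← heq]; linarith
      have h6 : ε * (1 / ((j:ℝ) * Real.log j * Real.log (Real.log j)))
          ≤ (j:ℝ) * (f (x j) - f xstar) := by
        rw [mul_one_div, div_le_iff₀ hwj]
        linarith
      calc 2 * η / p ^ 2 * ε * (1 / ((j:ℝ) * Real.log j * Real.log (Real.log j)))
          = 2 * η / p ^ 2 * (ε * (1 / ((j:ℝ) * Real.log j * Real.log (Real.log j)))) := by
            ring
        _ ≤ 2 * η / p ^ 2 * ((j:ℝ) * (f (x j) - f xstar)) :=
            mul_le_mul_of_nonneg_left h6 hq2.le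
        _ = 2 * η / p ^ 2 * (j:ℝ) * (f (x j) - f xstar) := by ring
    have hq3 : (0:ℝ) < 2 * η / p ^ 2 * ε := mul_pos hq2 hε
    have hS1 : 2 * η / p ^ 2 * ε * ((Φ 0 + 1) / (2 * η / p ^ 2 * ε))
        ≤ 2 * η / p ^ 2 * ε
          * (∑ j ∈ Finset.Ico (max N 3) M, 1 / ((j:ℝ) * Real.log j * Real.log (Real.log j))) :=
      mul_le_mul_of_nonneg_left hM2 hq3.le
    have hS1' : 2 * η / p ^ 2 * ε * ((Φ 0 + 1) / (2 * η / p ^ 2 * ε)) = Φ 0 + 1 := by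
      field_simp
    have hS2 : 2 * η / p ^ 2 * ε
          * (∑ j ∈ Finset.Ico (max N 3) M, 1 / ((j:ℝ) * Real.log j * Real.log (Real.log j)))
        = ∑ j ∈ Finset.Ico (max N 3) M,
            2 * η / p ^ 2 * ε * (1 / ((j:ℝ) * Real.log j * Real.log (Real.log j))) :=
      Finset.mul_sum _ _ _
    have hS3 : (∑ j ∈ Finset.Ico (max N 3) M,
            2 * η / p ^ 2 * ε * (1 / ((j:ℝ) * Real.log j * Real.log (Real.log j))))
        ≤ ∑ j ∈ Finset.Ico (max N 3) M, 2 * η / p ^ 2 * (j:ℝ) * (f (x j) - f xstar) :=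
      Finset.sum_le_sum hterm
    have hS4 : (∑ j ∈ Finset.Ico (max N 3) M, 2 * η / p ^ 2 * (j:ℝ) * (f (x j) - f xstar))
        ≤ ∑ j ∈ Finset.range M, 2 * η / p ^ 2 * (j:ℝ) * (f (x j) - f xstar) := by
      apply Finset.sum_le_sum_of_subset_of_nonneg
      · intro j hj
        rw [Finset.mem_Ico] at hj
        exact Finset.mem_range.2 hj.2
      · intro j _ _
        exact mul_nonneg (mul_nonneg hq2.le (Nat.cast_nonneg j)) (hA j)
    have := hBsum M
    rw [hS1', hS2] at hS1
    linarith
  have hev : ∀ᶠ k in Filter.atTop, 0 ≤ u k :=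
    Filter.eventually_atTop.2 ⟨3, fun k hk => hupos k hk⟩
  have hbdd : Filter.IsBoundedUnder (· ≥ ·) Filter.atTop u :=
    Filter.isBoundedUnder_of_eventually_ge hev
  have hfr : ∀ ε : ℝ, 0 < ε → ∃ᶠ k in Filter.atTop, u k ≤ ε := by
    intro ε hε
    rw [Filter.frequently_atTop]
    intro N
    obtain ⟨k, h1, h2⟩ := hfreq ε hε N
    exact ⟨k, h1, h2⟩
  have hco : Filter.IsCoboundedUnder (· ≥ ·) Filter.atTop u :=
    Filter.IsCoboundedUnder.of_frequently_le (hfr 1 one_pos)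
  refine le_antisymm ?_ (Filter.le_liminf_of_le hco hev)
  by_contra hlt
  push_neg at hlt
  have := Filter.liminf_le_of_frequently_le
    (hfr (Filter.liminf u Filter.atTop / 2) (by linarith)) hbdd
  linarith
end

section
/- Fix k ∈ ℕ and suppose: y_k = (1−α_k)·x_k + α_k·z_k; the descent estimate f(x_{k+1}) ≤ f(y_k) − η·‖g_k‖² holds; the bias bound ‖g_k − ∇f(y_k)‖ ≤ C·ε_k holds; z_k and x* lie in the closed ball B_μ of radius μ centered at the origin; and z_{k+1} is the metric projection of z_k − (η/α_k)·g_k onto B_μ. Then (1/γ_k + α_k/γ_{k+1} − 1/γ_{k+1})·δ_k ≤ Δ_k/γ_k − Δ_{k+1}/γ_{k+1} + 2·C·μ·α_k·ε_k/γ_{k+1}. -/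
open scoped RealInnerProductSpace

lemma nsa_grad_ineq {n : ℕ} (f : EuclideanSpace ℝ (Fin n) → ℝ)
    (hconv : ConvexOn ℝ Set.univ f) (hdiff : Differentiable ℝ f)
    (y u : EuclideanSpace ℝ (Fin n)) :
    f y + ⟪gradient f y, u - y⟫ ≤ f u := by
  set φ : ℝ → ℝ := fun t => f (y + t • (u - y)) with hφdef
  have hφeq : φ = f ∘ (AffineMap.lineMap y u : ℝ →ᵃ[ℝ] _) := by
    funext t
    simp only [φ, Function.comp_apply, AffineMap.lineMap_apply_module]
    congr 1
    module
  have hφconv : ConvexOn ℝ Set.univ φ := by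
    rw [hφeq]
    simpa using hconv.comp_affineMap (AffineMap.lineMap y u : ℝ →ᵃ[ℝ] _)
  have hg : HasGradientAt f (gradient f y) y := (hdiff y).hasGradientAt
  have hfd : HasFDerivAt f (InnerProductSpace.toDual ℝ _ (gradient f y)) y :=
    hasGradientAt_iff_hasFDerivAt.mp hg
  have hline : HasDerivAt (fun t : ℝ => y + t • (u - y)) (u - y) 0 := by
    simpa using ((hasDerivAt_id (0 : ℝ)).smul_const (u - y)).const_add y
  have hφd : HasDerivAt φ ⟪gradient f y, u - y⟫ 0 := by
    have h := HasFDerivAt.comp_hasDerivAt 0 (by simpa using hfd) hline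
    simpa [φ, InnerProductSpace.toDual_apply_apply, Function.comp_def] using h
  have hsl := hφconv.le_slope_of_hasDerivAt (Set.mem_univ (0 : ℝ)) (Set.mem_univ 1)
    one_pos hφd
  rw [slope_def_field] at hsl
  have h1 : y + (1:ℝ) • (u - y) = u := by module
  have h0 : y + (0:ℝ) • (u - y) = y := by module
  simp only [φ, h1, h0] at hsl
  rw [show (1:ℝ) - 0 = 1 by norm_num, div_one] at hsl
  linarith

set_option maxHeartbeats 2000000 in
/-- One-step Lyapunov inequality for the NSA algorithm with inexact gradients
and projection onto the ball `B_μ`. -/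
theorem nsa_stmt_11 (n : ℕ) (hn : 1 ≤ n)
    (f : EuclideanSpace ℝ (Fin n) → ℝ)
    (hconv : ConvexOn ℝ Set.univ f)
    (hdiff : Differentiable ℝ f)
    (xstar : EuclideanSpace ℝ (Fin n)) (hmin : ∀ u, f xstar ≤ f u)
    (η : ℝ) (hη : 0 < η)
    (αk : ℝ) (hαk0 : 0 < αk) (hαk1 : αk ≤ 1)
    (εk : ℝ) (hεk : 0 ≤ εk)
    (C : ℝ) (hC : 0 < C)
    (μ : ℝ) (hμ : 0 < μ)
    (xk xk1 yk zk zk1 gk : EuclideanSpace ℝ (Fin n))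
    (γk γk1 : ℝ) (hγk : 0 < γk) (hγk1 : γk1 = αk ^ 2 / η)
    (hy : yk = (1 - αk) • xk + αk • zk)
    (hdesc : f xk1 ≤ f yk - η * ‖gk‖ ^ 2)
    (hbias : ‖gk - gradient f yk‖ ≤ C * εk)
    (hzk : zk ∈ Metric.closedBall (0 : EuclideanSpace ℝ (Fin n)) μ)
    (hxstar : xstar ∈ Metric.closedBall (0 : EuclideanSpace ℝ (Fin n)) μ)
    (hzk1mem : zk1 ∈ Metric.closedBall (0 : EuclideanSpace ℝ (Fin n)) μ)
    (hzk1proj : ∀ u ∈ Metric.closedBall (0 : EuclideanSpace ℝ (Fin n)) μ,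
      ‖zk - (η / αk) • gk - zk1‖ ≤ ‖zk - (η / αk) • gk - u‖) :
    (1 / γk + αk / γk1 - 1 / γk1) * (f xk - f xstar) ≤
      (γk / 2 * ‖zk - xstar‖ ^ 2 + (f xk - f xstar)) / γk
        - (γk1 / 2 * ‖zk1 - xstar‖ ^ 2 + (f xk1 - f xstar)) / γk1
        + 2 * C * μ * αk * εk / γk1 := by
  have hγk1pos : 0 < γk1 := by rw [hγk1]; positivity
  set d := gradient f yk with hd
  set c : ℝ := η / αk with hc
  have hcpos : 0 < c := by positivity
  set v : EuclideanSpace ℝ (Fin n) := zk - c • gk with hv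
  set B : ℝ := ⟪gk, zk - xstar⟫ with hB
  set E : ℝ := ⟪d, zk - xstar⟫ with hE
  -- Projection: obtuse angle property
  haveI : Nonempty ↑(Metric.closedBall (0 : EuclideanSpace ℝ (Fin n)) μ) := ⟨⟨zk1, hzk1mem⟩⟩
  have hbdd : BddBelow (Set.range fun w : Metric.closedBall (0 : EuclideanSpace ℝ (Fin n)) μ =>
      ‖v - (w : EuclideanSpace ℝ (Fin n))‖) := ⟨0, by rintro x ⟨w, rfl⟩; positivity⟩
  have h1 : (⨅ w : Metric.closedBall (0 : EuclideanSpace ℝ (Fin n)) μ,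
      ‖v - (w : EuclideanSpace ℝ (Fin n))‖) ≤ ‖v - zk1‖ := ciInf_le hbdd ⟨zk1, hzk1mem⟩
  have h2 : ‖v - zk1‖ ≤ ⨅ w : Metric.closedBall (0 : EuclideanSpace ℝ (Fin n)) μ,
      ‖v - (w : EuclideanSpace ℝ (Fin n))‖ := le_ciInf fun w => hzk1proj w w.2
  have hobtuse : ⟪v - zk1, xstar - zk1⟫ ≤ 0 :=
    (norm_eq_iInf_iff_real_inner_le_zero (convex_closedBall _ _) hzk1mem).mp
      (le_antisymm h2 h1) xstar hxstar
  have hprojsq : ‖zk1 - xstar‖ ^ 2 ≤ ‖v - xstar‖ ^ 2 := by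
    have hsplit : v - xstar = (v - zk1) + (zk1 - xstar) := by abel
    have hexp := norm_add_sq_real (v - zk1) (zk1 - xstar)
    rw [← hsplit] at hexp
    have hflip : ⟪v - zk1, zk1 - xstar⟫ = -⟪v - zk1, xstar - zk1⟫ := by
      rw [show zk1 - xstar = -(xstar - zk1) by abel, inner_neg_right]
    nlinarith [sq_nonneg ‖v - zk1‖]
  have hvexp : ‖v - xstar‖ ^ 2 = ‖zk - xstar‖ ^ 2 - 2 * c * B + c ^ 2 * ‖gk‖ ^ 2 := by
    have h1 : v - xstar = (zk - xstar) - c • gk := by rw [hv]; abel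
    have h2 := norm_sub_sq_real (zk - xstar) (c • gk)
    have h3 : ⟪zk - xstar, c • gk⟫ = c * B := by
      rw [real_inner_smul_right, hB, real_inner_comm]
    have h4 : ‖c • gk‖ = c * ‖gk‖ := by
      rw [norm_smul, Real.norm_eq_abs, abs_of_pos hcpos]
    rw [h1, h2, h3, h4]
    ring
  have hD : ‖zk1 - xstar‖ ^ 2 ≤ ‖zk - xstar‖ ^ 2 - 2 * c * B + c ^ 2 * ‖gk‖ ^ 2 := by
    rw [← hvexp]; exact hprojsq
  -- multiply by γk1/2
  have hD2 := mul_le_mul_of_nonneg_left hD (by positivity : (0:ℝ) ≤ γk1 / 2)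
  have hcoef : γk1 / 2 * (‖zk - xstar‖ ^ 2 - 2 * c * B + c ^ 2 * ‖gk‖ ^ 2)
      = γk1 / 2 * ‖zk - xstar‖ ^ 2 - αk * B + η / 2 * ‖gk‖ ^ 2 := by
    rw [hγk1, hc]
    field_simp
  have hD3 : γk1 / 2 * ‖zk1 - xstar‖ ^ 2
      ≤ γk1 / 2 * ‖zk - xstar‖ ^ 2 - αk * B + η / 2 * ‖gk‖ ^ 2 := by
    linarith [hD2, hcoef.symm.le, hcoef.le]
  -- Cauchy–Schwarz bias bound
  have hnormz : ‖zk - xstar‖ ≤ 2 * μ := by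
    have h1 : ‖zk‖ ≤ μ := by simpa using hzk
    have h2 : ‖xstar‖ ≤ μ := by simpa using hxstar
    calc ‖zk - xstar‖ ≤ ‖zk‖ + ‖xstar‖ := norm_sub_le _ _
      _ ≤ 2 * μ := by linarith
  have hCS : E - B ≤ 2 * C * μ * εk := by
    have h1 : E - B = ⟪d - gk, zk - xstar⟫ := by rw [hE, hB, inner_sub_left]
    have h2 : ⟪d - gk, zk - xstar⟫ ≤ ‖d - gk‖ * ‖zk - xstar‖ := real_inner_le_norm _ _
    have h3 : ‖d - gk‖ = ‖gk - d‖ := norm_sub_rev _ _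
    have h4 : ‖d - gk‖ * ‖zk - xstar‖ ≤ (C * εk) * (2 * μ) := by
      apply mul_le_mul (h3 ▸ hbias) hnormz (norm_nonneg _)
      positivity
    linarith [h1.le, h1.ge, h2, h4]
  -- Convexity combination
  have hcx := nsa_grad_ineq f hconv hdiff yk xk
  have hcs := nsa_grad_ineq f hconv hdiff yk xstar
  have hvec : (1 - αk) • (xk - yk) + αk • (xstar - yk) = αk • (xstar - zk) := by
    subst hy; module
  have hid : (1 - αk) * ⟪d, xk - yk⟫ + αk * ⟪d, xstar - yk⟫ = -(αk * E) := by
    have h1 : (1 - αk) * ⟪d, xk - yk⟫ + αk * ⟪d, xstar - yk⟫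
        = ⟪d, (1 - αk) • (xk - yk) + αk • (xstar - yk)⟫ := by
      rw [inner_add_right, real_inner_smul_right, real_inner_smul_right]
    rw [h1, hvec, real_inner_smul_right]
    have : ⟪d, xstar - zk⟫ = -E := by
      rw [hE, show xstar - zk = -(zk - xstar) by abel, inner_neg_right]
    rw [this]; ring
  have hcomb : f yk ≤ (1 - αk) * f xk + αk * f xstar + αk * E := by
    have h1 := mul_le_mul_of_nonneg_left hcx (by linarith : (0:ℝ) ≤ 1 - αk)
    have h2 := mul_le_mul_of_nonneg_left hcs hαk0.le
    linarith [h1, h2, hid]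
  -- Key one-step inequality
  have hGnn : 0 ≤ η * ‖gk‖ ^ 2 := by positivity
  have key : (αk - 1) * (f xk - f xstar) + (f xk1 - f xstar) - 2 * C * μ * αk * εk
      ≤ γk1 * (‖zk - xstar‖ ^ 2 - ‖zk1 - xstar‖ ^ 2) / 2 := by
    have hCSa := mul_le_mul_of_nonneg_left hCS hαk0.le
    linarith [hdesc, hcomb, hD3, hGnn, hCSa]
  -- Final arithmetic
  have key2 : ((αk - 1) * (f xk - f xstar) + (f xk1 - f xstar) - 2 * C * μ * αk * εk) / γk1
      ≤ (‖zk - xstar‖ ^ 2 - ‖zk1 - xstar‖ ^ 2) / 2 := by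
    rw [div_le_iff₀ hγk1pos]
    linarith [key]
  have e1 : (γk / 2 * ‖zk - xstar‖ ^ 2 + (f xk - f xstar)) / γk
      = ‖zk - xstar‖ ^ 2 / 2 + (f xk - f xstar) / γk := by
    rw [add_div]
    congr 1
    rw [div_eq_iff (ne_of_gt hγk)]
    ring
  have e2 : (γk1 / 2 * ‖zk1 - xstar‖ ^ 2 + (f xk1 - f xstar)) / γk1
      = ‖zk1 - xstar‖ ^ 2 / 2 + (f xk1 - f xstar) / γk1 := by
    rw [add_div]
    congr 1
    rw [div_eq_iff (ne_of_gt hγk1pos)]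
    ring
  rw [e1, e2]
  have e3 : ((αk - 1) * (f xk - f xstar) + (f xk1 - f xstar) - 2 * C * μ * αk * εk) / γk1
      = (αk / γk1) * (f xk - f xstar) - (1 / γk1) * (f xk - f xstar)
        + (f xk1 - f xstar) / γk1 - 2 * C * μ * αk * εk / γk1 := by
    ring
  rw [e3] at key2
  ring_nf at key2 ⊢
  linarith [key2]
end

section
/- The proximal NSA iterates satisfy: there exists a constant c ≥ 0 (depending only on the initialization, p, s and η) such that f(x_k) − f* ≤ c/k² for all k ≥ 1. -/
open scoped RealInnerProductSpace

set_option maxHeartbeats 1600000 in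
/-- The proximal version of the NSA algorithm achieves an `O(1/k²)` rate:
`f (x k) - f* ≤ c / k²` for all `k ≥ 1`, for some constant `c ≥ 0`. -/
theorem nsa_stmt_13 (n : ℕ) (hn : 1 ≤ n)
    (f : EuclideanSpace ℝ (Fin n) → ℝ)
    (hconv : ConvexOn ℝ Set.univ f)
    (xstar : EuclideanSpace ℝ (Fin n)) (hmin : ∀ u, f xstar ≤ f u)
    (p : ℝ) (hp : 3 ≤ p)
    (s η : ℝ) (hs : 0 < s) (hη : 0 < η) (hsη : η / 2 ≤ s)
    (α : ℕ → ℝ) (hα : ∀ k : ℕ, α k = p / (k + p))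
    (x z g : ℕ → EuclideanSpace ℝ (Fin n))
    (hx0 : x 0 = z 0)
    (hsubgrad : ∀ k : ℕ, ∀ u,
      f (x (k + 1)) + ⟪g (k + 1), u - x (k + 1)⟫ ≤ f u)
    (hx : ∀ k, x (k + 1) = (1 - α k) • x k + α k • z k - s • g (k + 1))
    (hz : ∀ k, z (k + 1) = z k - (η / α k) • g (k + 1)) :
    ∃ c : ℝ, 0 ≤ c ∧ ∀ k : ℕ, 1 ≤ k → f (x k) - f xstar ≤ c / (k : ℝ) ^ 2 := by
  have hp0 : (0:ℝ) < p := by linarith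
  have hpne : p ≠ 0 := ne_of_gt hp0
  have hηne : η ≠ 0 := ne_of_gt hη
  -- per-step Lyapunov inequality
  have step : ∀ k : ℕ,
      (f (x (k+1)) - f xstar) + (α k)^2/(2*η) * ‖z (k+1) - xstar‖^2 ≤
      (1 - α k) * (f (x k) - f xstar) + (α k)^2/(2*η) * ‖z k - xstar‖^2 := by
    intro k
    have htk : (0:ℝ) < (k:ℝ) + p := by positivity
    have ha0 : 0 < α k := by rw [hα]; positivity
    have ha1 : α k ≤ 1 := by
      rw [hα]
      rw [div_le_one htk]
      have : (0:ℝ) ≤ (k:ℝ) := Nat.cast_nonneg k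
      linarith
    have hane : α k ≠ 0 := ne_of_gt ha0
    have h1 := hsubgrad k (x k)
    have h2 := hsubgrad k xstar
    have hvec : (1 - α k) • (x k - x (k+1)) + (α k) • (xstar - x (k+1))
        = s • g (k+1) + (α k) • (xstar - z k) := by
      rw [hx k]; module
    have hinner : (1 - α k) * ⟪g (k+1), x k - x (k+1)⟫
        + (α k) * ⟪g (k+1), xstar - x (k+1)⟫
        = s * ‖g (k+1)‖^2 + (α k) * ⟪g (k+1), xstar - z k⟫ := by
      have h := congrArg (fun v => ⟪g (k+1), v⟫) hvec
      simp only [inner_add_right, real_inner_smul_right,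
        real_inner_self_eq_norm_sq] at h
      linarith [h]
    have ez : z (k+1) - xstar = (z k - xstar) - (η / α k) • g (k+1) := by
      rw [hz k]; module
    have hswap : ⟪z k - xstar, g (k+1)⟫ = -⟪g (k+1), xstar - z k⟫ := by
      rw [real_inner_comm]
      rw [show xstar - z k = -(z k - xstar) by abel, inner_neg_right, neg_neg]
    have hnorm : ‖z (k+1) - xstar‖^2 = ‖z k - xstar‖^2
        - 2*((η / α k) * ⟪z k - xstar, g (k+1)⟫)
        + (η / α k)^2 * ‖g (k+1)‖^2 := by
      rw [ez, norm_sub_sq_real, real_inner_smul_right, norm_smul, mul_pow,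
        Real.norm_eq_abs, sq_abs]
    have hkey : (α k)^2/(2*η) * ‖z (k+1) - xstar‖^2
        = (α k)^2/(2*η) * ‖z k - xstar‖^2
          + (α k) * ⟪g (k+1), xstar - z k⟫ + (η/2) * ‖g (k+1)‖^2 := by
      rw [hnorm, hswap]; field_simp; ring
    have hcomb : f (x (k+1)) + s * ‖g (k+1)‖^2
        + (α k) * ⟪g (k+1), xstar - z k⟫ ≤ (1 - α k) * f (x k) + (α k) * f xstar := by
      have e1 := mul_le_mul_of_nonneg_left h1 (by linarith : (0:ℝ) ≤ 1 - α k)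
      have e2 := mul_le_mul_of_nonneg_left h2 ha0.le
      nlinarith [hinner, e1, e2]
    have hN : (η/2) * ‖g (k+1)‖^2 ≤ s * ‖g (k+1)‖^2 :=
      mul_le_mul_of_nonneg_right hsη (sq_nonneg _)
    linarith [hcomb, hkey, hN]
  -- main invariant
  have main : ∀ k : ℕ, 1 ≤ k →
      (((k:ℝ) - 1 + p)^2 / p^2) * (f (x k) - f xstar)
        + ‖z k - xstar‖^2 / (2*η) ≤ ‖z 0 - xstar‖^2 / (2*η) := by
    intro k hk
    induction k, hk using Nat.le_induction with
    | base =>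
      have hα0 : α 0 = 1 := by
        rw [hα]; norm_num; exact hpne
      have st := step 0
      rw [hα0] at st
      simp only [one_pow, div_mul_eq_mul_div, one_mul, sub_self, zero_mul,
        zero_add] at st
      have hc : ((((1:ℕ):ℝ) - 1 + p)^2 / p^2) = 1 := by
        push_cast
        rw [show (1:ℝ) - 1 + p = p by ring]
        exact div_self (pow_ne_zero 2 hpne)
      rw [hc, one_mul]
      linarith
    | succ k hk ih =>
      have htk : (0:ℝ) < (k:ℝ) + p := by positivity
      have htne : ((k:ℝ) + p) ≠ 0 := ne_of_gt htk
      have hst := step k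
      rw [hα k] at hst
      have c0 : (0:ℝ) ≤ ((k:ℝ)+p)^2 / p^2 := by positivity
      have hmul := mul_le_mul_of_nonneg_left hst c0
      have e1 : ((k:ℝ)+p)^2 / p^2 *
          ((f (x (k+1)) - f xstar) + (p/((k:ℝ)+p))^2/(2*η) * ‖z (k+1) - xstar‖^2)
          = ((k:ℝ)+p)^2 / p^2 * (f (x (k+1)) - f xstar)
            + ‖z (k+1) - xstar‖^2 / (2*η) := by
        field_simp
      have e2 : ((k:ℝ)+p)^2 / p^2 *
          ((1 - p/((k:ℝ)+p)) * (f (x k) - f xstar)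
            + (p/((k:ℝ)+p))^2/(2*η) * ‖z k - xstar‖^2)
          = ((k:ℝ)*((k:ℝ)+p)/p^2) * (f (x k) - f xstar)
            + ‖z k - xstar‖^2 / (2*η) := by
        field_simp; ring
      rw [e1, e2] at hmul
      have hδ : 0 ≤ f (x k) - f xstar := sub_nonneg.mpr (hmin _)
      have hnum : (k:ℝ)*((k:ℝ)+p) ≤ ((k:ℝ) - 1 + p)^2 := by
        nlinarith [(Nat.cast_nonneg k : (0:ℝ) ≤ (k:ℝ))]
      have hcoef : (k:ℝ)*((k:ℝ)+p)/p^2 ≤ ((k:ℝ) - 1 + p)^2 / p^2 := by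
        gcongr
      have hmid := mul_le_mul_of_nonneg_right hcoef hδ
      have hc : ((↑(k+1):ℝ) - 1 + p) = (k:ℝ) + p := by push_cast; ring
      rw [hc]
      linarith
  -- conclude
  refine ⟨p^2 * (‖z 0 - xstar‖^2 / (2*η)), by positivity, ?_⟩
  intro k hk
  have hδ : 0 ≤ f (x k) - f xstar := sub_nonneg.mpr (hmin _)
  have hk1 : (1:ℝ) ≤ (k:ℝ) := by exact_mod_cast hk
  have hR : 0 ≤ ‖z k - xstar‖^2 / (2*η) := by positivity
  have h1 : (((k:ℝ) - 1 + p)^2 / p^2) * (f (x k) - f xstar)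
      ≤ ‖z 0 - xstar‖^2 / (2*η) := by linarith [main k hk]
  have h3 : ((k:ℝ) - 1 + p)^2 * (f (x k) - f xstar)
      ≤ p^2 * (‖z 0 - xstar‖^2 / (2*η)) := by
    have := mul_le_mul_of_nonneg_left h1 (by positivity : (0:ℝ) ≤ p^2)
    calc ((k:ℝ) - 1 + p)^2 * (f (x k) - f xstar)
        = p^2 * ((((k:ℝ) - 1 + p)^2 / p^2) * (f (x k) - f xstar)) := by
          field_simp
      _ ≤ p^2 * (‖z 0 - xstar‖^2 / (2*η)) := this
  have hsq : (k:ℝ)^2 ≤ ((k:ℝ) - 1 + p)^2 := by nlinarith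
  have h2 : (k:ℝ)^2 * (f (x k) - f xstar) ≤ ((k:ℝ) - 1 + p)^2 * (f (x k) - f xstar) :=
    mul_le_mul_of_nonneg_right hsq hδ
  rw [le_div_iff₀ (by positivity : (0:ℝ) < (k:ℝ)^2)]
  linarith
end

section
/- Along the continuous-time NSA dynamics, the energy E(t) = (p²/2)·‖Z(t) − x*‖² + t²·(f(X(t)) − f*) is nonincreasing on (0,∞); indeed E is differentiable with E'(t) = −c·t²·‖∇f(X(t))‖² + (p−2)·t·⟨∇f(X(t)), x* − X(t)⟩ ≤ 0 for all t > 0. -/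
open scoped RealInnerProductSpace

private lemma grad_convex_le {n : ℕ} (f : EuclideanSpace ℝ (Fin n) → ℝ)
    (hconv : ConvexOn ℝ Set.univ f) (hdiff : ContDiff ℝ 1 f)
    (x y : EuclideanSpace ℝ (Fin n)) :
    ⟪gradient f x, y - x⟫ ≤ f y - f x := by
  set φ : ℝ → ℝ := fun s => f (AffineMap.lineMap x y s) with hφ
  have hφconv : ConvexOn ℝ Set.univ φ := by
    have := hconv.comp_affineMap (AffineMap.lineMap x y : ℝ →ᵃ[ℝ] _)
    simp only [Set.preimage_univ] at this
    exact this
  have hcurve : HasDerivAt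
      (fun s : ℝ => (AffineMap.lineMap x y s : EuclideanSpace ℝ (Fin n))) (y - x) 0 := by
    simp only [AffineMap.lineMap_apply_module]
    have h1 := (((hasDerivAt_id (0:ℝ)).const_sub 1).smul_const x).add
      ((hasDerivAt_id (0:ℝ)).smul_const y)
    exact h1.congr_deriv (by module)
  have hF : HasFDerivAt f (InnerProductSpace.toDual ℝ _ (gradient f x)) x :=
    ((hdiff.differentiable one_ne_zero) x).hasGradientAt
  have hφd : HasDerivAt φ ⟪gradient f x, y - x⟫ 0 := by
    have := hF.comp_hasDerivAt_of_eq 0 hcurve (by simp)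
    simp only [InnerProductSpace.toDual_apply_apply] at this
    exact this
  have hs := hφconv.le_slope_of_hasDerivAt (Set.mem_univ (0:ℝ)) (Set.mem_univ 1)
    one_pos hφd
  rw [slope_def_field] at hs
  simpa [hφ] using hs

/-- Along the continuous-time NSA dynamics, the energy
`E(t) = (p²/2)‖Z(t) - x*‖² + t²(f(X(t)) - f*)` is differentiable with
derivative bounded by `-c t² ‖∇f(X(t))‖² + (p-2) t ⟨∇f(X(t)), x* - X(t)⟩ ≤ 0`,
and is nonincreasing on `(0, ∞)`. -/
theorem nsa_stmt_14 (n : ℕ) (hn : 1 ≤ n)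
    (f : EuclideanSpace ℝ (Fin n) → ℝ)
    (hconv : ConvexOn ℝ Set.univ f)
    (hdiff : ContDiff ℝ 1 f)
    (xstar : EuclideanSpace ℝ (Fin n)) (hmin : ∀ u, f xstar ≤ f u)
    (p c : ℝ) (hp : 2 ≤ p) (hc : 0 < c)
    (X Z X' Z' : ℝ → EuclideanSpace ℝ (Fin n))
    (hX : ∀ t : ℝ, 0 < t → HasDerivAt X (X' t) t)
    (hZ : ∀ t : ℝ, 0 < t → HasDerivAt Z (Z' t) t)
    (hode1 : ∀ t : ℝ, 0 < t →
      t • X' t + p • (X t - Z t) + (c * t) • gradient f (X t) = 0)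
    (hode2 : ∀ t : ℝ, 0 < t →
      Z' t + (t / p) • gradient f (X t) = 0) :
    (∀ t : ℝ, 0 < t → ∃ d : ℝ,
      HasDerivAt
        (fun τ : ℝ => p ^ 2 / 2 * ‖Z τ - xstar‖ ^ 2 + τ ^ 2 * (f (X τ) - f xstar))
        d t ∧
      d ≤ -c * t ^ 2 * ‖gradient f (X t)‖ ^ 2
            + (p - 2) * t * ⟪gradient f (X t), xstar - X t⟫ ∧
      -c * t ^ 2 * ‖gradient f (X t)‖ ^ 2
            + (p - 2) * t * ⟪gradient f (X t), xstar - X t⟫ ≤ 0) ∧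
    (∀ t₀ t : ℝ, 0 < t₀ → t₀ ≤ t →
      p ^ 2 / 2 * ‖Z t - xstar‖ ^ 2 + t ^ 2 * (f (X t) - f xstar) ≤
        p ^ 2 / 2 * ‖Z t₀ - xstar‖ ^ 2 + t₀ ^ 2 * (f (X t₀) - f xstar)) := by
  have hppos : (0:ℝ) < p := lt_of_lt_of_le two_pos hp
  have hgradle : ∀ a : EuclideanSpace ℝ (Fin n),
      ⟪gradient f a, xstar - a⟫ ≤ f xstar - f a := fun a =>
    grad_convex_le f hconv hdiff a xstar
  have main : ∀ t : ℝ, 0 < t → ∃ d : ℝ,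
      HasDerivAt
        (fun τ : ℝ => p ^ 2 / 2 * ‖Z τ - xstar‖ ^ 2 + τ ^ 2 * (f (X τ) - f xstar))
        d t ∧
      d ≤ -c * t ^ 2 * ‖gradient f (X t)‖ ^ 2
            + (p - 2) * t * ⟪gradient f (X t), xstar - X t⟫ ∧
      -c * t ^ 2 * ‖gradient f (X t)‖ ^ 2
            + (p - 2) * t * ⟪gradient f (X t), xstar - X t⟫ ≤ 0 := by
    intro t ht
    set g := gradient f (X t) with hg
    have hZ' := (hZ t ht).sub_const xstar
    have hA : HasDerivAt (fun τ => ‖Z τ - xstar‖ ^ 2)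
        (⟪Z t - xstar, Z' t⟫ + ⟪Z' t, Z t - xstar⟫) t := by
      have h := hZ'.inner ℝ hZ'
      have e : (fun τ => ⟪Z τ - xstar, Z τ - xstar⟫) = fun τ => ‖Z τ - xstar‖ ^ 2 :=
        funext fun τ => real_inner_self_eq_norm_sq _
      rwa [e] at h
    have hF : HasFDerivAt f (InnerProductSpace.toDual ℝ _ g) (X t) :=
      ((hdiff.differentiable one_ne_zero) (X t)).hasGradientAt
    have hfX : HasDerivAt (fun τ => f (X τ)) ⟪g, X' t⟫ t := by
      have := hF.comp_hasDerivAt t (hX t ht)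
      simp [InnerProductSpace.toDual_apply_apply] at this
      exact this
    have hB : HasDerivAt (fun τ : ℝ => τ ^ 2 * (f (X τ) - f xstar))
        (2 * t * (f (X t) - f xstar) + t ^ 2 * ⟪g, X' t⟫) t := by
      have h1 : HasDerivAt (fun τ : ℝ => τ ^ 2) (2 * t) t := by
        simpa using hasDerivAt_pow 2 t
      have := h1.mul (hfX.sub_const (f xstar))
      exact this
    -- ODE consequences
    have hZ'eq : Z' t = -((t / p) • g) := eq_neg_of_add_eq_zero_left (hode2 t ht)
    have h1 : ⟪Z' t, Z t - xstar⟫ = -(t / p) * ⟪g, Z t - xstar⟫ := by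
      rw [hZ'eq, inner_neg_left, real_inner_smul_left]; ring
    have htX' : t • X' t = -(p • (X t - Z t) + (c * t) • g) := by
      have h := hode1 t ht
      rw [add_assoc] at h
      exact eq_neg_of_add_eq_zero_left h
    have h2 : t ^ 2 * ⟪g, X' t⟫ = (-(p * ⟪g, X t - Z t⟫ + c * t * ‖g‖ ^ 2)) * t := by
      have e : t ^ 2 * ⟪g, X' t⟫ = ⟪g, t • X' t⟫ * t := by
        rw [real_inner_smul_right]; ring
      rw [e, htX', inner_neg_right, inner_add_right, real_inner_smul_right,
        real_inner_smul_right, real_inner_self_eq_norm_sq]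
      try ring
    have hsum : ⟪g, Z t - xstar⟫ + ⟪g, X t - Z t⟫ = ⟪g, X t - xstar⟫ := by
      rw [← inner_add_right]
      congr 1
      abel
    have hneg : ⟪g, xstar - X t⟫ = -⟪g, X t - xstar⟫ := by
      rw [show xstar - X t = -(X t - xstar) by abel, inner_neg_right]
    have hcvx : f (X t) - f xstar ≤ ⟪g, X t - xstar⟫ := by
      have h := hgradle (X t)
      rw [hneg] at h
      linarith
    have hd : p ^ 2 / 2 * (⟪Z t - xstar, Z' t⟫ + ⟪Z' t, Z t - xstar⟫)
        + (2 * t * (f (X t) - f xstar) + t ^ 2 * ⟪g, X' t⟫)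
        = 2 * t * (f (X t) - f xstar) - p * t * ⟪g, X t - xstar⟫
          - c * t ^ 2 * ‖g‖ ^ 2 := by
      have h1b : ⟪Z t - xstar, Z' t⟫ = -(t / p) * ⟪g, Z t - xstar⟫ := by
        rw [real_inner_comm]; exact h1
      rw [h1b, h1, h2, ← hsum]
      field_simp
      ring
    refine ⟨_, (hA.const_mul (p ^ 2 / 2)).add hB, ?_, ?_⟩
    · rw [hd, hneg]
      have := mul_le_mul_of_nonneg_left hcvx ht.le
      nlinarith
    · have hI : ⟪g, xstar - X t⟫ ≤ 0 := le_trans (hgradle (X t)) (by linarith [hmin (X t)])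
      have h3 : (p - 2) * t * ⟪g, xstar - X t⟫ ≤ 0 :=
        mul_nonpos_of_nonneg_of_nonpos (mul_nonneg (by linarith) ht.le) hI
      have h4 : 0 ≤ c * t ^ 2 * ‖g‖ ^ 2 :=
        mul_nonneg (mul_nonneg hc.le (sq_nonneg t)) (sq_nonneg _)
      linarith
  refine ⟨main, ?_⟩
  intro t₀ t ht₀ htt
  have hanti : AntitoneOn
      (fun τ : ℝ => p ^ 2 / 2 * ‖Z τ - xstar‖ ^ 2 + τ ^ 2 * (f (X τ) - f xstar))
      (Set.Ici t₀) := by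
    apply antitoneOn_of_deriv_nonpos (convex_Ici t₀)
    · intro s hs
      obtain ⟨d, hder, -, -⟩ := main s (lt_of_lt_of_le ht₀ hs)
      exact hder.continuousAt.continuousWithinAt
    · intro s hs
      rw [interior_Ici] at hs
      obtain ⟨d, hder, -, -⟩ := main s (ht₀.trans hs)
      exact hder.differentiableAt.differentiableWithinAt
    · intro s hs
      rw [interior_Ici] at hs
      obtain ⟨d, hder, hle, hle0⟩ := main s (ht₀.trans hs)
      rw [hder.deriv]
      linarith
  exact hanti Set.self_mem_Ici (Set.mem_Ici.mpr htt) htt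
end
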